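/- arXiv:1906.01225 — 4 statements merged into one kernel-verified Lean document; each statement's English description precedes it below -/
import Mathlib

section
/- Let A be a real d×d matrix all of whose eigenvalues have strictly positive real part, and let K be a real d×d' matrix; set C := ∫₀^∞ exp(-sA) · K Kᵀ · exp(-sAᵀ) ds. Then A is invertible and A⁻¹ K Kᵀ (A⁻¹)ᵀ = A⁻¹ C + C (A⁻¹)ᵀ. Consequently, for any real n×d matrix σ, writing Γ := σ A⁻¹ K, one has σ (A⁻¹ C + C (A⁻¹)ᵀ) σᵀ = Γ Γᵀ. -/
open Matrix MeasureTheory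

/-- The integrand `exp(-sA) · K Kᵀ · exp(-sAᵀ)` of the Lyapunov integral. -/
noncomputable def lyapunovIntegrand {d d' : ℕ} (A : Matrix (Fin d) (Fin d) ℝ)
    (K : Matrix (Fin d) (Fin d') ℝ) (s : ℝ) : Matrix (Fin d) (Fin d) ℝ :=
  NormedSpace.exp (-(s • A)) * (K * Kᵀ) * NormedSpace.exp (-(s • Aᵀ))

/-- The matrix `C := ∫₀^∞ exp(-sA) K Kᵀ exp(-sAᵀ) ds`, defined entrywise. -/
noncomputable def lyapunovSolution {d d' : ℕ} (A : Matrix (Fin d) (Fin d) ℝ)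
    (K : Matrix (Fin d) (Fin d') ℝ) : Matrix (Fin d) (Fin d) ℝ :=
  Matrix.of fun i j => ∫ s in Set.Ioi (0 : ℝ), lyapunovIntegrand A K s i j

open NormedSpace
open scoped NNReal ENNReal
attribute [local instance] Matrix.linftyOpNormedAddCommGroup Matrix.linftyOpNormedRing Matrix.linftyOpNormedAlgebra

theorem isUnit_of_spectrum {d : ℕ} (A : Matrix (Fin d) (Fin d) ℝ)
    (hA : ∀ μ ∈ spectrum ℂ (A.map (Complex.ofReal)), 0 < μ.re) : IsUnit A := by
  have h0 : (0:ℂ) ∉ spectrum ℂ (A.map Complex.ofReal) := fun h => by simpa using hA 0 h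
  have hu : IsUnit (A.map Complex.ofReal) := spectrum.zero_notMem_iff ℂ |>.mp h0
  rw [Matrix.isUnit_iff_isUnit_det] at hu ⊢
  have hdet : (A.map Complex.ofReal).det = (A.det : ℂ) :=
    (RingHom.map_det Complex.ofRealHom A).symm
  rw [hdet, isUnit_iff_ne_zero] at hu
  exact isUnit_iff_ne_zero.mpr (by exact_mod_cast hu)

theorem entry_le_norm {m n : Type*} [Fintype m] [Fintype n] (M : Matrix m n ℂ) (i : m) (j : n) :
    ‖M i j‖ ≤ ‖M‖ := by
  have : ‖M i j‖₊ ≤ ‖M‖₊ := by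
    rw [Matrix.linfty_opNNNorm_def]
    exact le_trans (Finset.single_le_sum (f := fun k => ‖M i k‖₊) (fun k _ => zero_le)
      (Finset.mem_univ j)) (Finset.le_sup (f := fun i => ∑ j, ‖M i j‖₊) (Finset.mem_univ i))
  exact_mod_cast this

theorem map_exp_ofReal {d : ℕ} (M : Matrix (Fin d) (Fin d) ℝ) :
    (exp M).map Complex.ofReal = exp (M.map Complex.ofReal) := by
  have hcont : Continuous (fun N : Matrix (Fin d) (Fin d) ℝ => N.map Complex.ofReal) :=
    continuous_id.matrix_map Complex.continuous_ofReal
  have h := map_exp (Complex.ofRealHom.mapMatrix :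
      Matrix (Fin d) (Fin d) ℝ →+* Matrix (Fin d) (Fin d) ℂ) hcont M
  exact h

theorem mulVec_exp_eigen {d : ℕ} (B : Matrix (Fin d) (Fin d) ℂ) (lam : ℂ) (w : Fin d → ℂ)
    (hw : B.mulVec w = lam • w) : (exp B).mulVec w = Complex.exp lam • w := by
  have hpow : ∀ n : ℕ, (B ^ n).mulVec w = lam ^ n • w := by
    intro n
    induction n with
    | zero => simp
    | succ n ih =>
      rw [pow_succ, ← Matrix.mulVec_mulVec, hw, Matrix.mulVec_smul, ih, smul_smul, pow_succ,
        mul_comm]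
  let L0 : Matrix (Fin d) (Fin d) ℂ →ₗ[ℂ] (Fin d → ℂ) :=
    { toFun := fun M => M.mulVec w
      map_add' := fun M N => Matrix.add_mulVec M N w
      map_smul' := fun c M => Matrix.smul_mulVec c M w }
  let L : Matrix (Fin d) (Fin d) ℂ →L[ℂ] (Fin d → ℂ) := L0.toContinuousLinearMap
  have hs : Summable fun n : ℕ => ((n.factorial : ℂ)⁻¹ • B ^ n) := expSeries_summable' B
  have h1 : L (exp B) = ∑' n : ℕ, ((n.factorial : ℂ)⁻¹ * lam ^ n) • w := by
    rw [exp_eq_tsum (𝕂 := ℂ), L.map_tsum hs]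
    refine tsum_congr fun n => ?_
    show ((n.factorial : ℂ)⁻¹ • B ^ n).mulVec w = _
    rw [Matrix.smul_mulVec, hpow, smul_smul]
  have hsc : Summable fun n : ℕ => ((n.factorial : ℂ)⁻¹ * lam ^ n) := by
    simpa [smul_eq_mul] using (expSeries_summable' (𝕂 := ℂ) lam)
  rw [hsc.tsum_smul_const] at h1
  have h2 : (∑' n : ℕ, ((n.factorial : ℂ)⁻¹ * lam ^ n)) = Complex.exp lam := by
    rw [Complex.exp_eq_exp_ℂ, exp_eq_tsum (𝕂 := ℂ)]
    simp [smul_eq_mul]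
  rw [h2] at h1
  exact h1

theorem spectrum_exp_subset {d : ℕ} (B : Matrix (Fin d) (Fin d) ℂ) (μ : ℂ)
    (hμ : μ ∈ spectrum ℂ (exp B)) : ∃ lam ∈ spectrum ℂ B, μ = Complex.exp lam := by
  classical
  let e := Matrix.toLinAlgEquiv' (n := Fin d) (R := ℂ)
  set g : Module.End ℂ (Fin d → ℂ) := e (exp B) with hg
  set f : Module.End ℂ (Fin d → ℂ) := e B with hf
  have hμg : μ ∈ spectrum ℂ g := by rw [AlgEquiv.spectrum_eq]; exact hμ
  have hev : g.HasEigenvalue μ := Module.End.HasEigenvalue.of_mem_spectrum hμg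
  set E := g.eigenspace μ with hE
  have hcomm : ∀ v, g (f v) = f (g v) := by
    intro v
    have : Commute B (exp B) := (Commute.refl B).exp_right
    have := congrArg e this.eq
    simp only [_root_.map_mul] at this
    exact (LinearMap.congr_fun this v).symm
  have hinv : ∀ v ∈ E, f v ∈ E := by
    intro v hv
    rw [hE, Module.End.mem_eigenspace_iff] at hv ⊢
    rw [hcomm, hv, LinearMap.map_smul]
  haveI : Nontrivial E := Submodule.nontrivial_iff_ne_bot.mpr hev
  let f' : Module.End ℂ E := LinearMap.restrict f hinv
  obtain ⟨lam, hlam⟩ := Module.End.exists_eigenvalue f'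
  obtain ⟨w, hwE, hw0⟩ := hlam.exists_hasEigenvector
  -- w : E, f' w = lam • w
  have hfw : f (w : Fin d → ℂ) = lam • (w : Fin d → ℂ) := by
    have : f' w = lam • w := Module.End.mem_eigenspace_iff.mp hwE
    have := congrArg (Subtype.val) this
    simpa [f', LinearMap.restrict_apply] using this
  have hw0' : (w : Fin d → ℂ) ≠ 0 := fun h => hw0 (Subtype.ext h)
  have hlamB : lam ∈ spectrum ℂ B := by
    rw [← AlgEquiv.spectrum_eq e B, ← Module.End.hasEigenvalue_iff_mem_spectrum]
    exact Module.End.hasEigenvalue_of_hasEigenvector ⟨Module.End.mem_eigenspace_iff.mpr hfw, hw0'⟩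
  refine ⟨lam, hlamB, ?_⟩
  -- g w = exp lam • w  and g w = μ • w
  have hBw : B.mulVec (w : Fin d → ℂ) = lam • (w : Fin d → ℂ) := by
    rw [← hfw]; rfl
  have h1 : (exp B).mulVec (w : Fin d → ℂ) = Complex.exp lam • (w : Fin d → ℂ) :=
    mulVec_exp_eigen B lam _ hBw
  have h2 : g (w : Fin d → ℂ) = μ • (w : Fin d → ℂ) := by
    have hmem : (w : Fin d → ℂ) ∈ g.eigenspace μ := w.2
    exact Module.End.mem_eigenspace_iff.mp hmem
  have h3 : g (w : Fin d → ℂ) = (exp B).mulVec (w : Fin d → ℂ) := rfl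
  rw [h3, h1] at h2
  by_contra hne
  exact hw0' (by
    have := sub_eq_zero.mpr h2
    rwa [← sub_smul, smul_eq_zero, sub_eq_zero, or_iff_right (fun h => hne h.symm)] at this)

-- step: powers bound from spectral radius < 1
theorem pow_norm_le {d : ℕ} (B : Matrix (Fin d) (Fin d) ℂ)
    (h : spectralRadius ℂ B < 1) :
    ∃ c ≥ 1, ∃ q : ℝ, 0 < q ∧ q < 1 ∧ ∀ n : ℕ, ‖B ^ n‖ ≤ c * q ^ n := by
  obtain ⟨r, hr1, hr2⟩ := ENNReal.lt_iff_exists_nnreal_btwn.mp h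
  set q : ℝ≥0 := max r (1/2) with hq
  have hq0 : 0 < q := lt_of_lt_of_le (by norm_num) (le_max_right _ _)
  have hq1 : q < 1 := max_lt (by exact_mod_cast hr2) (by exact_mod_cast (by norm_num : (1/2:ℝ) < 1))
  have hρq : spectralRadius ℂ B < (q : ℝ≥0∞) := lt_of_lt_of_le hr1 (by exact_mod_cast le_max_left _ _)
  have htends := spectrum.pow_nnnorm_pow_one_div_tendsto_nhds_spectralRadius B
  have hev : ∀ᶠ n : ℕ in Filter.atTop, (‖B ^ n‖₊ : ℝ≥0∞) ^ (1/(n:ℝ)) < (q : ℝ≥0∞) :=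
    htends.eventually_lt_const hρq
  obtain ⟨N, hN⟩ := hev.exists_forall_of_atTop
  -- for n ≥ max N 1 : ‖B^n‖₊ ≤ q^n
  have key : ∀ n : ℕ, n ≥ max N 1 → ‖B ^ n‖₊ ≤ q ^ n := by
    intro n hn
    have hn1 : 1 ≤ n := le_trans (le_max_right _ _) hn
    have h1 := hN n (le_trans (le_max_left _ _) hn)
    have h2 : (‖B ^ n‖₊ : ℝ≥0∞) ^ (1/(n:ℝ)) ≤ (q : ℝ≥0∞) := le_of_lt h1
    have hcoe : ((‖B ^ n‖₊ ^ (1/(n:ℝ)) : ℝ≥0) : ℝ≥0∞) = (‖B ^ n‖₊ : ℝ≥0∞) ^ (1/(n:ℝ)) :=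
      ENNReal.coe_rpow_of_nonneg _ (by positivity : (0:ℝ) ≤ 1/(n:ℝ))
    rw [← hcoe, ENNReal.coe_le_coe] at h2
    have h3 : (‖B ^ n‖₊ ^ (1/(n:ℝ))) ^ (n:ℝ) ≤ q ^ (n:ℝ) :=
      NNReal.rpow_le_rpow h2 (by positivity)
    rw [← NNReal.rpow_natCast q n]
    rwa [← NNReal.rpow_mul, one_div, inv_mul_cancel₀ (by positivity : (0:ℝ) < (n:ℝ)).ne', NNReal.rpow_one] at h3
  set c : ℝ := 1 + ∑ n ∈ Finset.range (max N 1), ‖B ^ n‖ / (q:ℝ) ^ n with hc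
  have hterms : ∀ n ∈ Finset.range (max N 1), (0:ℝ) ≤ ‖B ^ n‖ / (q:ℝ) ^ n := by
    intro n _; positivity
  have hc1 : 1 ≤ c := le_add_of_nonneg_right (Finset.sum_nonneg hterms)
  refine ⟨c, hc1, q, hq0, hq1, fun n => ?_⟩
  rcases lt_or_ge n (max N 1) with hlt | hge
  · have hmem : n ∈ Finset.range (max N 1) := Finset.mem_range.mpr hlt
    have : ‖B ^ n‖ / (q:ℝ) ^ n ≤ c := by
      rw [hc]
      have := Finset.single_le_sum hterms hmem
      linarith
    have hqn : (0:ℝ) < (q:ℝ) ^ n := by positivity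
    calc ‖B ^ n‖ = (‖B ^ n‖ / (q:ℝ)^n) * (q:ℝ)^n := by field_simp
    _ ≤ c * (q:ℝ)^n := by exact mul_le_mul_of_nonneg_right this hqn.le
  · have := key n hge
    have h4 : ‖B ^ n‖ ≤ (q:ℝ) ^ n := by exact_mod_cast this
    calc ‖B ^ n‖ ≤ (q:ℝ)^n := h4
    _ ≤ c * (q:ℝ)^n := le_mul_of_one_le_left (by positivity) hc1

theorem spectralRadius_lt {d : ℕ} (A : Matrix (Fin d) (Fin d) ℝ)
    (hA : ∀ μ ∈ spectrum ℂ (A.map (Complex.ofReal)), 0 < μ.re) :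
    spectralRadius ℂ (exp (-(A.map Complex.ofReal))) < 1 := by
  set Aℂ := A.map Complex.ofReal with hAC
  set B := exp (-Aℂ) with hB
  have hlt : ∀ μ ∈ spectrum ℂ B, ‖μ‖₊ < 1 := by
    intro μ hμ
    obtain ⟨lam, hlam, rfl⟩ := spectrum_exp_subset (-Aℂ) μ hμ
    rw [← spectrum.neg_eq, Set.mem_neg] at hlam
    have hre := hA (-lam) hlam
    have : ‖Complex.exp lam‖ < 1 := by
      rw [Complex.norm_exp]
      exact Real.exp_lt_one_iff.mpr (by simpa using hre)
    exact_mod_cast this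
  rcases Set.eq_empty_or_nonempty (spectrum ℂ B) with hemp | hne
  · rw [spectralRadius, hemp]
    simp
  · obtain ⟨μ₀, hμ₀, hmax⟩ := (spectrum.isCompact (𝕜 := ℂ) (a := B)).exists_isMaxOn hne
      (continuous_nnnorm.continuousOn)
    have h1 : spectralRadius ℂ B ≤ (‖μ₀‖₊ : ℝ≥0∞) := by
      rw [spectralRadius]
      exact iSup₂_le fun k hk => by exact_mod_cast hmax hk
    exact lt_of_le_of_lt h1 (by exact_mod_cast hlt μ₀ hμ₀)

theorem exp_decay {d : ℕ} (A : Matrix (Fin d) (Fin d) ℝ)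
    (hA : ∀ μ ∈ spectrum ℂ (A.map (Complex.ofReal)), 0 < μ.re) :
    ∃ c > 0, ∃ ε > 0, ∀ s : ℝ, 0 ≤ s →
      ‖exp (-(s • (A.map Complex.ofReal)))‖ ≤ c * Real.exp (-(ε * s)) := by
  set Aℂ := A.map Complex.ofReal with hAC
  obtain ⟨c₀, hc₀, q, hq0, hq1, hpow⟩ := pow_norm_le _ (spectralRadius_lt A hA)
  -- bound on [0,1]
  have hcontE : Continuous (fun r : ℝ => exp (r • (-Aℂ))) := by
    have hEE : (exp : Matrix (Fin d) (Fin d) ℂ → _) = exp := rfl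
    rw [continuous_iff_continuousAt]
    intro r
    have h := (hasDerivAt_exp_smul_const (𝕂 := ℝ) (-Aℂ) r).continuousAt
    exact h
  obtain ⟨c₁, hc₁⟩ := (isCompact_Icc (a := (0:ℝ)) (b := 1)).exists_bound_of_continuousOn
    hcontE.continuousOn
  set c₁' := max c₁ 1 with hc₁'
  have hc₁'1 : (1:ℝ) ≤ c₁' := le_max_right _ _
  have hc₁'' : ∀ r ∈ Set.Icc (0:ℝ) 1, ‖exp (r • (-Aℂ))‖ ≤ c₁' :=
    fun r hr => le_trans (hc₁ r hr) (le_max_left _ _)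
  have hlogq : Real.log q < 0 := Real.log_neg hq0 hq1
  set ε := -Real.log q with hε
  have hε0 : 0 < ε := by simp [hε]; linarith
  refine ⟨c₀ * c₁' * Real.exp ε, by positivity, ε, hε0, fun s hs => ?_⟩
  set n := ⌊s⌋₊ with hn
  set r := s - n with hr
  have hns : (n:ℝ) ≤ s := Nat.floor_le hs
  have hr0 : 0 ≤ r := by simp [hr]; linarith
  have hr1 : r ≤ 1 := by
    have := Nat.lt_floor_add_one s
    simp only [hr]; linarith
  have hsplit : -(s • Aℂ) = (n:ℝ) • (-Aℂ) + r • (-Aℂ) := by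
    rw [← add_smul]
    have : (n:ℝ) + r = s := by simp [hr]
    rw [this, smul_neg]
  have hcomm : Commute ((n:ℝ) • (-Aℂ)) (r • (-Aℂ)) :=
    ((Commute.refl (-Aℂ)).smul_left ((n:ℝ))).smul_right r
  have hexp : exp (-(s • Aℂ)) = exp (-Aℂ) ^ n * exp (r • (-Aℂ)) := by
    rw [hsplit, Matrix.exp_add_of_commute _ _ hcomm, Nat.cast_smul_eq_nsmul, Matrix.exp_nsmul]
  have h1 : ‖exp (-(s • Aℂ))‖ ≤ (c₀ * q ^ n) * c₁' := by
    rw [hexp]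
    refine le_trans (norm_mul_le _ _) (mul_le_mul (hpow n) (hc₁'' r ⟨hr0, hr1⟩)
      (norm_nonneg _) (by positivity))
  have h2 : q ^ n ≤ Real.exp ε * Real.exp (-(ε * s)) := by
    have hsn : s - 1 ≤ (n:ℝ) := by
      have := Nat.lt_floor_add_one s
      simp only [hn] at *
      linarith
    have h3 : q ^ n = q ^ ((n:ℝ)) := (Real.rpow_natCast q n).symm
    have h4 : q ^ ((n:ℝ)) ≤ q ^ (s - 1) :=
      Real.rpow_le_rpow_of_exponent_ge hq0 hq1.le hsn
    have h5 : q ^ (s - 1) = Real.exp (Real.log q * (s - 1)) := by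
      rw [Real.rpow_def_of_pos hq0]
    have h6 : Real.log q * (s - 1) = ε + -(ε * s) := by
      simp [hε]; ring
    rw [h3]
    calc q ^ ((n:ℝ)) ≤ q ^ (s-1) := h4
    _ = Real.exp (ε + -(ε * s)) := by rw [h5, h6]
    _ = Real.exp ε * Real.exp (-(ε * s)) := Real.exp_add _ _
  calc ‖exp (-(s • Aℂ))‖ ≤ (c₀ * q ^ n) * c₁' := h1
  _ ≤ (c₀ * (Real.exp ε * Real.exp (-(ε * s)))) * c₁' := by
      have := mul_le_mul_of_nonneg_left h2 (le_trans zero_le_one hc₀)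
      nlinarith [le_trans zero_le_one hc₁'1]
  _ = c₀ * c₁' * Real.exp ε * Real.exp (-(ε * s)) := by ring

-- entrywise decay of the real exponential

theorem real_exp_entry_decay {d : ℕ} (A : Matrix (Fin d) (Fin d) ℝ)
    (hA : ∀ μ ∈ spectrum ℂ (A.map (Complex.ofReal)), 0 < μ.re) :
    ∃ c > 0, ∃ ε > 0, ∀ s : ℝ, 0 ≤ s → ∀ i j : Fin d,
      |(exp (-(s • A))) i j| ≤ c * Real.exp (-(ε * s)) := by
  obtain ⟨c, hc, ε, hε, hbound⟩ := exp_decay A hA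
  refine ⟨c, hc, ε, hε, fun s hs i j => ?_⟩
  have hmap : (exp (-(s • A))).map Complex.ofReal = exp (-(s • (A.map Complex.ofReal))) := by
    rw [map_exp_ofReal]
    congr 1
    ext i j
    simp [Matrix.map_apply, Complex.real_smul]
  have h1 : |(exp (-(s • A))) i j| = ‖((exp (-(s • A))).map Complex.ofReal) i j‖ := by
    simp [Matrix.map_apply, Complex.norm_real, Real.norm_eq_abs]
  rw [h1, hmap]
  exact le_trans (entry_le_norm _ i j) (hbound s hs)

-- derivative of the integrand
theorem integrand_hasDerivAt {d d' : ℕ} (A : Matrix (Fin d) (Fin d) ℝ)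
    (K : Matrix (Fin d) (Fin d') ℝ) (s : ℝ) :
    HasDerivAt (fun t => lyapunovIntegrand A K t)
      (-(A * lyapunovIntegrand A K s + lyapunovIntegrand A K s * Aᵀ)) s := by
  have hX : HasDerivAt (fun t : ℝ => exp (t • (-A))) ((-A) * exp (s • (-A))) s :=
    hasDerivAt_exp_smul_const' (𝕂 := ℝ) (-A) s
  have hY : HasDerivAt (fun t : ℝ => exp (t • (-Aᵀ))) (exp (s • (-Aᵀ)) * (-Aᵀ)) s :=
    hasDerivAt_exp_smul_const (𝕂 := ℝ) (-Aᵀ) s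
  have h1 : HasDerivAt (fun t : ℝ => exp (t • (-A)) * (K * Kᵀ))
      ((-A) * exp (s • (-A)) * (K * Kᵀ)) s := hX.mul_const _
  have h2 := h1.mul hY
  have heq : ∀ t : ℝ, lyapunovIntegrand A K t = exp (t • (-A)) * (K * Kᵀ) * exp (t • (-Aᵀ)) := by
    intro t; rw [lyapunovIntegrand, smul_neg, smul_neg]
  have : HasDerivAt (fun t => lyapunovIntegrand A K t)
      ((-A) * exp (s • (-A)) * (K * Kᵀ) * exp (s • (-Aᵀ))
        + exp (s • (-A)) * (K * Kᵀ) * (exp (s • (-Aᵀ)) * (-Aᵀ))) s := by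
    refine HasDerivAt.congr_deriv (h2.congr_of_eventuallyEq ?_) rfl
    filter_upwards with t using (heq t)
  convert this using 1
  rw [heq s]
  simp only [neg_mul, mul_neg, neg_add, mul_assoc]

-- continuity of the integrand
theorem integrand_continuous {d d' : ℕ} (A : Matrix (Fin d) (Fin d) ℝ)
    (K : Matrix (Fin d) (Fin d') ℝ) :
    Continuous (fun t => lyapunovIntegrand A K t) := by
  rw [continuous_iff_continuousAt]
  exact fun s => (integrand_hasDerivAt A K s).continuousAt


noncomputable def entryCLM {d : ℕ} (i j : Fin d) : Matrix (Fin d) (Fin d) ℝ →L[ℝ] ℝ :=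
  LinearMap.toContinuousLinearMap
    { toFun := fun M => M i j, map_add' := fun _ _ => rfl, map_smul' := fun _ _ => rfl }

theorem integrand_entry_bound {d d' : ℕ} (A : Matrix (Fin d) (Fin d) ℝ)
    (K : Matrix (Fin d) (Fin d') ℝ)
    (hA : ∀ μ ∈ spectrum ℂ (A.map (Complex.ofReal)), 0 < μ.re) :
    ∃ c > 0, ∃ ε > 0, ∀ s : ℝ, 0 ≤ s → ∀ i j : Fin d,
      |lyapunovIntegrand A K s i j| ≤ c * Real.exp (-(ε * s)) := by
  obtain ⟨c, hc, ε, hε, hb⟩ := real_exp_entry_decay A hA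
  set M := K * Kᵀ with hM
  set S : ℝ := ∑ k : Fin d, ∑ l : Fin d, |M k l| with hS
  have hS0 : 0 ≤ S := Finset.sum_nonneg fun k _ => Finset.sum_nonneg fun l _ => abs_nonneg _
  refine ⟨c^2 * S + 1, by positivity, ε + ε, by positivity, fun s hs i j => ?_⟩
  set X := exp (-(s • A)) with hX
  set e := Real.exp (-(ε * s)) with he
  have he0 : 0 < e := Real.exp_pos _
  have hXb : ∀ k l, |X k l| ≤ c * e := fun k l => hb s hs k l
  have hYX : exp (-(s • Aᵀ)) = Xᵀ := by
    rw [hX, show -(s • Aᵀ) = (-(s • A))ᵀ by simp, Matrix.exp_transpose]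
  have hentry : lyapunovIntegrand A K s i j = ∑ l, (∑ k, X i k * M k l) * X j l := by
    rw [lyapunovIntegrand, hYX, ← hX, ← hM]
    simp [Matrix.mul_apply, Matrix.transpose_apply]
  rw [hentry]
  have key : |∑ l, (∑ k, X i k * M k l) * X j l| ≤ (c * e) * ((c * e) * S) := by
    refine le_trans (Finset.abs_sum_le_sum_abs _ _) ?_
    have step : ∀ l : Fin d, |(∑ k, X i k * M k l) * X j l| ≤ (c*e) * ((c*e) * ∑ k, |M k l|) := by
      intro l
      rw [abs_mul]
      have h1 : |∑ k, X i k * M k l| ≤ (c*e) * ∑ k, |M k l| := by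
        refine le_trans (Finset.abs_sum_le_sum_abs _ _) ?_
        rw [Finset.mul_sum]
        refine Finset.sum_le_sum fun k _ => ?_
        rw [abs_mul]
        exact mul_le_mul_of_nonneg_right (hXb i k) (abs_nonneg _)
      calc |∑ k, X i k * M k l| * |X j l| ≤ ((c*e) * ∑ k, |M k l|) * (c*e) :=
            mul_le_mul h1 (hXb j l) (abs_nonneg _) (by positivity)
      _ = (c*e) * ((c*e) * ∑ k, |M k l|) := by ring
    refine le_trans (Finset.sum_le_sum fun l _ => step l) (le_of_eq ?_)
    rw [← Finset.mul_sum, ← Finset.mul_sum, hS, Finset.sum_comm]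
  refine le_trans key ?_
  have hee : e * e = Real.exp (-((ε + ε) * s)) := by
    rw [he, ← Real.exp_add]; ring_nf
  have : (c * e) * ((c * e) * S) = (c^2 * S) * (e * e) := by ring
  rw [this, hee]
  have hle : c^2 * S ≤ c^2 * S + 1 := by linarith
  exact mul_le_mul_of_nonneg_right hle (Real.exp_pos _).le

theorem integrand_integrable_entry {d d' : ℕ} (A : Matrix (Fin d) (Fin d) ℝ)
    (K : Matrix (Fin d) (Fin d') ℝ)
    (hA : ∀ μ ∈ spectrum ℂ (A.map (Complex.ofReal)), 0 < μ.re) (i j : Fin d) :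
    IntegrableOn (fun s => lyapunovIntegrand A K s i j) (Set.Ioi (0:ℝ)) := by
  obtain ⟨c, hc, ε, hε, hb⟩ := integrand_entry_bound A K hA
  have hcont : Continuous fun s => lyapunovIntegrand A K s i j :=
    (entryCLM i j).continuous.comp (integrand_continuous A K)
  have hg : IntegrableOn (fun s => c * Real.exp (-(ε * s))) (Set.Ioi (0:ℝ)) := by
    have := (exp_neg_integrableOn_Ioi (0:ℝ) hε).const_mul c
    simpa [neg_mul, IntegrableOn] using this
  refine Integrable.mono' hg hcont.aestronglyMeasurable.restrict ?_
  filter_upwards [ae_restrict_mem measurableSet_Ioi] with s hs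
  rw [Real.norm_eq_abs]
  exact hb s (le_of_lt hs) i j

theorem integrand_tendsto {d d' : ℕ} (A : Matrix (Fin d) (Fin d) ℝ)
    (K : Matrix (Fin d) (Fin d') ℝ)
    (hA : ∀ μ ∈ spectrum ℂ (A.map (Complex.ofReal)), 0 < μ.re) (i j : Fin d) :
    Filter.Tendsto (fun s => lyapunovIntegrand A K s i j) Filter.atTop (nhds 0) := by
  obtain ⟨c, hc, ε, hε, hb⟩ := integrand_entry_bound A K hA
  refine squeeze_zero_norm' (a := fun s => c * Real.exp (-(ε * s))) ?_ ?_
  · filter_upwards [Filter.eventually_ge_atTop (0:ℝ)] with s hs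
    rw [Real.norm_eq_abs]
    exact hb s hs i j
  · have h1 : Filter.Tendsto (fun s : ℝ => -(ε * s)) Filter.atTop Filter.atBot := by
      apply Filter.tendsto_neg_atTop_atBot.comp
      exact Filter.Tendsto.const_mul_atTop hε Filter.tendsto_id
    have := (Real.tendsto_exp_atBot.comp h1).const_mul c
    simpa using this

theorem lyapunov_equation {d d' : ℕ} (A : Matrix (Fin d) (Fin d) ℝ)
    (K : Matrix (Fin d) (Fin d') ℝ)
    (hA : ∀ μ ∈ spectrum ℂ (A.map (Complex.ofReal)), 0 < μ.re) :
    A * lyapunovSolution A K + lyapunovSolution A K * Aᵀ = K * Kᵀ := by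
  set F := fun s => lyapunovIntegrand A K s with hF
  have hint := integrand_integrable_entry A K hA
  have hF0 : F 0 = K * Kᵀ := by
    rw [hF]; simp [lyapunovIntegrand]
  ext i j
  have hderiv : ∀ s ∈ Set.Ioi (0:ℝ), HasDerivAt (fun t => F t i j)
      ((-(A * F s + F s * Aᵀ)) i j) s := by
    intro s _
    have h := (entryCLM i j).hasFDerivAt.comp_hasDerivAt s (integrand_hasDerivAt A K s)
    exact h
  have h1 : IntegrableOn (fun s => ∑ k, A i k * F s k j) (Set.Ioi (0:ℝ)) :=
    integrable_finset_sum _ (fun k _ => (hint k j).const_mul _)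
  have h2 : IntegrableOn (fun s => ∑ k, F s i k * Aᵀ k j) (Set.Ioi (0:ℝ)) :=
    integrable_finset_sum _ (fun k _ => (hint i k).mul_const _)
  have hfun : (fun s => ((-(A * F s + F s * Aᵀ)) i j))
      = fun s => -((∑ k, A i k * F s k j) + (∑ k, F s i k * Aᵀ k j)) := by
    funext s
    simp [Matrix.mul_apply, Matrix.add_apply, Matrix.neg_apply]
  have g'int : IntegrableOn (fun s => ((-(A * F s + F s * Aᵀ)) i j)) (Set.Ioi (0:ℝ)) := by
    rw [hfun]; exact (h1.add h2).neg
  have hcont : ContinuousWithinAt (fun t => F t i j) (Set.Ici 0) 0 :=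
    ((entryCLM i j).continuous.comp (integrand_continuous A K)).continuousWithinAt
  have htend := integrand_tendsto A K hA i j
  have key := integral_Ioi_of_hasDerivAt_of_tendsto hcont hderiv g'int htend
  have hL : (∫ s in Set.Ioi (0:ℝ), ((-(A * F s + F s * Aᵀ)) i j))
      = -((A * lyapunovSolution A K) i j + (lyapunovSolution A K * Aᵀ) i j) := by
    rw [hfun, integral_neg, integral_add h1 h2]
    congr 1
    congr 1
    · rw [integral_finset_sum _ (fun k _ => (hint k j).const_mul _), Matrix.mul_apply]
      refine Finset.sum_congr rfl fun k _ => ?_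
      rw [MeasureTheory.integral_const_mul]
      rfl
    · rw [integral_finset_sum _ (fun k _ => (hint i k).mul_const _), Matrix.mul_apply]
      refine Finset.sum_congr rfl fun k _ => ?_
      rw [MeasureTheory.integral_mul_const]
      rfl
  rw [hL, hF0] at key
  have hgoal : (A * lyapunovSolution A K) i j + (lyapunovSolution A K * Aᵀ) i j
      = (K*Kᵀ) i j := by linarith [key]
  simpa [Matrix.add_apply] using hgoal


/-- If all eigenvalues of `A` have positive real part and
`C := ∫₀^∞ exp(-sA) K Kᵀ exp(-sAᵀ) ds`, then `A` is invertible,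
`A⁻¹ K Kᵀ (A⁻¹)ᵀ = A⁻¹ C + C (A⁻¹)ᵀ`, and for every `n × d` matrix `σ`, with
`Γ := σ A⁻¹ K`, one has `σ (A⁻¹ C + C (A⁻¹)ᵀ) σᵀ = Γ Γᵀ`. -/
theorem lyapunov_inverse_identity {d d' : ℕ}
    (A : Matrix (Fin d) (Fin d) ℝ) (K : Matrix (Fin d) (Fin d') ℝ)
    (hA : ∀ μ ∈ spectrum ℂ (A.map (Complex.ofReal)), 0 < μ.re)
    (C : Matrix (Fin d) (Fin d) ℝ) (hC : C = lyapunovSolution A K) :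
    IsUnit A ∧
      A⁻¹ * (K * Kᵀ) * (A⁻¹)ᵀ = A⁻¹ * C + C * (A⁻¹)ᵀ ∧
      ∀ (n : ℕ) (σ : Matrix (Fin n) (Fin d) ℝ),
        σ * (A⁻¹ * C + C * (A⁻¹)ᵀ) * σᵀ = (σ * A⁻¹ * K) * (σ * A⁻¹ * K)ᵀ := by
  have hU : IsUnit A := isUnit_of_spectrum A hA
  have hdet : IsUnit A.det := (Matrix.isUnit_iff_isUnit_det A).mp hU
  have hdetT : IsUnit Aᵀ.det := by rwa [Matrix.det_transpose]
  have hlyap : A * C + C * Aᵀ = K * Kᵀ := by rw [hC]; exact lyapunov_equation A K hA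
  have hTinv : (A⁻¹)ᵀ = (Aᵀ)⁻¹ := A.transpose_nonsing_inv
  have part2 : A⁻¹ * (K * Kᵀ) * (A⁻¹)ᵀ = A⁻¹ * C + C * (A⁻¹)ᵀ := by
    rw [← hlyap, hTinv]
    rw [Matrix.mul_add, Matrix.add_mul]
    have e1 : A⁻¹ * (A * C) * (Aᵀ)⁻¹ = C * (Aᵀ)⁻¹ := by
      rw [← Matrix.mul_assoc, Matrix.nonsing_inv_mul A hdet, Matrix.one_mul]
    have e2 : A⁻¹ * (C * Aᵀ) * (Aᵀ)⁻¹ = A⁻¹ * C := by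
      rw [Matrix.mul_assoc, Matrix.mul_assoc, Matrix.mul_nonsing_inv Aᵀ hdetT, Matrix.mul_one]
    rw [e1, e2, add_comm]
  refine ⟨hU, part2, fun n σ => ?_⟩
  rw [← part2, Matrix.transpose_mul, Matrix.transpose_mul]
  simp only [Matrix.mul_assoc]
end

section
/- Cauchy estimate for penalized solutions. Fix T > 0. Let f ∈ C([0,T]; ℝⁿ), let b : ℝⁿ → ℝⁿ be Lipschitz, and let φ : ℝⁿ → ℝ be convex and L-Lipschitz. For p ≥ 1 let φ_p(x) := inf_{z∈ℝⁿ} { φ(z) + (p/2)‖x − z‖² } be the Moreau–Yosida regularization, and assume (as is the case) that each φ_p is differentiable on ℝⁿ with gradient ∇φ_p. For p ≥ 1 let x^p : [0,T] → ℝⁿ be the solution of the ODE ẋ^p(t) + ∇φ_p(x^p(t)) = b(x^p(t)) + f(t) with x^p(0) = x₀. Then there exists a constant C_T > 0, depending only on L, the Lipschitz constant of b, and T, such that for all p, q ≥ 1, sup_{0 ≤ t ≤ T} ‖x^p(t) − x^q(t)‖² ≤ C_T (1/p + 1/q). -/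
open Set MeasureTheory Topology Filter

/-- The Moreau–Yosida regularization `φ_p(x) := inf_z { φ(z) + (p/2)‖x − z‖² }`. -/
noncomputable def moreauYosida {n : ℕ} (φ : EuclideanSpace ℝ (Fin n) → ℝ) (p : ℝ)
    (x : EuclideanSpace ℝ (Fin n)) : ℝ :=
  ⨅ z : EuclideanSpace ℝ (Fin n), (φ z + p / 2 * ‖x - z‖ ^ 2)

section Aux

open RealInnerProductSpace

variable {n : ℕ} {φ : EuclideanSpace ℝ (Fin n) → ℝ} {L : NNReal} {p : ℝ}

lemma my_lb (hLip : LipschitzWith L φ) (hp : 0 < p) (x z : EuclideanSpace ℝ (Fin n)) :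
    φ x - (L : ℝ) ^ 2 / (2 * p) ≤ φ z + p / 2 * ‖x - z‖ ^ 2 := by
  have h1 : φ x - φ z ≤ (L : ℝ) * ‖x - z‖ := by
    have h := hLip.dist_le_mul x z
    rw [Real.dist_eq, dist_eq_norm] at h
    have := abs_le.1 h
    linarith [this.2]
  have key : p * (p / 2 * ‖x - z‖ ^ 2 + (L : ℝ) ^ 2 / (2 * p) - (L : ℝ) * ‖x - z‖) =
      (p * ‖x - z‖ - (L : ℝ)) ^ 2 / 2 := by
    field_simp
    ring
  nlinarith [sq_nonneg (p * ‖x - z‖ - (L : ℝ)), hp, key, h1]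

lemma my_bdd (hLip : LipschitzWith L φ) (hp : 0 < p) (x : EuclideanSpace ℝ (Fin n)) :
    BddBelow (range fun z : EuclideanSpace ℝ (Fin n) => φ z + p / 2 * ‖x - z‖ ^ 2) := by
  refine ⟨φ x - (L : ℝ) ^ 2 / (2 * p), ?_⟩
  rintro _ ⟨z, rfl⟩
  exact my_lb hLip hp x z

lemma my_le (hLip : LipschitzWith L φ) (hp : 0 < p) (x : EuclideanSpace ℝ (Fin n)) :
    moreauYosida φ p x ≤ φ x := by
  have := ciInf_le (my_bdd hLip hp x) x
  simpa [moreauYosida] using this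

lemma my_ge (hLip : LipschitzWith L φ) (hp : 0 < p) (x : EuclideanSpace ℝ (Fin n)) :
    φ x - (L : ℝ) ^ 2 / (2 * p) ≤ moreauYosida φ p x :=
  le_ciInf (my_lb hLip hp x)

lemma my_convex (hconv : ConvexOn ℝ univ φ) (hLip : LipschitzWith L φ) (hp : 0 < p) :
    ConvexOn ℝ univ (moreauYosida φ p) := by
  refine ⟨convex_univ, ?_⟩
  intro x _ y _ a c ha hc hac
  simp only [smul_eq_mul]
  rcases eq_or_lt_of_le ha with rfl | ha'
  · simp only [zero_add] at hac; subst hac; simp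
  rcases eq_or_lt_of_le hc with rfl | hc'
  · simp only [add_zero] at hac; subst hac; simp
  have key : ∀ z₁ z₂ : EuclideanSpace ℝ (Fin n),
      moreauYosida φ p (a • x + c • y) ≤
        a * (φ z₁ + p / 2 * ‖x - z₁‖ ^ 2) + c * (φ z₂ + p / 2 * ‖y - z₂‖ ^ 2) := by
    intro z₁ z₂
    have h1 : moreauYosida φ p (a • x + c • y) ≤
        φ (a • z₁ + c • z₂) + p / 2 * ‖(a • x + c • y) - (a • z₁ + c • z₂)‖ ^ 2 :=
      ciInf_le (my_bdd hLip hp _) _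
    have h2 : φ (a • z₁ + c • z₂) ≤ a * φ z₁ + c * φ z₂ :=
      hconv.2 (mem_univ _) (mem_univ _) ha hc hac
    have h3 : (a • x + c • y) - (a • z₁ + c • z₂) = a • (x - z₁) + c • (y - z₂) := by
      module
    have h4 : ‖(a • x + c • y) - (a • z₁ + c • z₂)‖ ^ 2 ≤
        a * ‖x - z₁‖ ^ 2 + c * ‖y - z₂‖ ^ 2 := by
      rw [h3]
      have h5 : ‖a • (x - z₁) + c • (y - z₂)‖ ≤ a * ‖x - z₁‖ + c * ‖y - z₂‖ := by
        refine (norm_add_le _ _).trans ?_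
        rw [norm_smul, norm_smul, Real.norm_eq_abs, Real.norm_eq_abs,
          abs_of_nonneg ha, abs_of_nonneg hc]
      have h6 : (a * ‖x - z₁‖ + c * ‖y - z₂‖) ^ 2 ≤ a * ‖x - z₁‖ ^ 2 + c * ‖y - z₂‖ ^ 2 := by
        nlinarith [sq_nonneg (‖x - z₁‖ - ‖y - z₂‖), mul_pos ha' hc']
      calc ‖a • (x - z₁) + c • (y - z₂)‖ ^ 2
          ≤ (a * ‖x - z₁‖ + c * ‖y - z₂‖) ^ 2 := by
            apply sq_le_sq' _ h5
            nlinarith [norm_nonneg (a • (x - z₁) + c • (y - z₂)),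
              mul_nonneg ha (norm_nonneg (x - z₁)), mul_nonneg hc (norm_nonneg (y - z₂))]
        _ ≤ _ := h6
    nlinarith [hp]
  -- now take infima
  have step1 : ∀ z₁ : EuclideanSpace ℝ (Fin n),
      moreauYosida φ p (a • x + c • y) ≤
        a * (φ z₁ + p / 2 * ‖x - z₁‖ ^ 2) + c * moreauYosida φ p y := by
    intro z₁
    have : (moreauYosida φ p (a • x + c • y) - a * (φ z₁ + p / 2 * ‖x - z₁‖ ^ 2)) / c ≤
        moreauYosida φ p y := by
      refine le_ciInf fun z₂ => ?_
      rw [div_le_iff₀ hc']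
      have := key z₁ z₂
      linarith [mul_comm (φ z₂ + p / 2 * ‖y - z₂‖ ^ 2) c]
    rw [div_le_iff₀ hc'] at this
    linarith [mul_comm (moreauYosida φ p y) c]
  have step2 : (moreauYosida φ p (a • x + c • y) - c * moreauYosida φ p y) / a ≤
      moreauYosida φ p x := by
    refine le_ciInf fun z₁ => ?_
    rw [div_le_iff₀ ha']
    have := step1 z₁
    linarith [mul_comm (φ z₁ + p / 2 * ‖x - z₁‖ ^ 2) a]
  rw [div_le_iff₀ ha'] at step2
  linarith [mul_comm (moreauYosida φ p x) a]

/-- Gradient inequality for a convex differentiable function. -/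
lemma grad_ineq {F : EuclideanSpace ℝ (Fin n) → ℝ} {G x : EuclideanSpace ℝ (Fin n)}
    (hF : ConvexOn ℝ univ F) (hG : HasGradientAt F G x) (w : EuclideanSpace ℝ (Fin n)) :
    ⟪G, w - x⟫ ≤ F w - F x := by
  rcases eq_or_ne w x with rfl | hw
  · simp
  set d := w - x with hd
  set h : ℝ → ℝ := fun s => F (x + s • d) with hh
  have hconvh : ConvexOn ℝ univ h := by
    have := hF.comp_affineMap (AffineMap.lineMap x w)
    have heq : (F ∘ (AffineMap.lineMap x w)) = h := by
      funext s
      simp [h, AffineMap.lineMap_apply_module', d, add_comm]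
    rw [heq] at this
    simpa using this
  have hderiv : HasDerivAt h ⟪G, d⟫ 0 := by
    have hline : HasDerivAt (fun s : ℝ => x + s • d) d (0 : ℝ) := by
      simpa using ((hasDerivAt_id (0 : ℝ)).smul_const d).const_add x
    have hG' : HasFDerivAt F ((InnerProductSpace.toDual ℝ (EuclideanSpace ℝ (Fin n))) G)
        (x + (0 : ℝ) • d) := by simpa using hG.hasFDerivAt
    have := hG'.comp_hasDerivAt (0 : ℝ) hline
    exact (by simpa using this : HasDerivAt (F ∘ fun s : ℝ => x + s • d) ⟪G, d⟫ 0)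
  have hs := hconvh.le_slope_of_hasDerivAt (mem_univ (0 : ℝ)) (mem_univ (1 : ℝ))
    one_pos hderiv
  rw [slope_def_field] at hs
  have h0 : h 0 = F x := by simp [h]
  have h1 : h 1 = F w := by simp [h, d]
  rw [h0, h1] at hs
  simpa using hs

/-- Monotonicity-type estimate for Moreau–Yosida gradients. -/
lemma my_mono (hconv : ConvexOn ℝ univ φ) (hLip : LipschitzWith L φ)
    {q : ℝ} (hp : 1 ≤ p) (hq : 1 ≤ q) {gp gq x y : EuclideanSpace ℝ (Fin n)}
    (hgp : HasGradientAt (moreauYosida φ p) gp x)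
    (hgq : HasGradientAt (moreauYosida φ q) gq y) :
    -((L : ℝ) ^ 2 / 2) * (1 / p + 1 / q) ≤ ⟪gp - gq, x - y⟫ := by
  have hp0 : (0 : ℝ) < p := lt_of_lt_of_le one_pos hp
  have hq0 : (0 : ℝ) < q := lt_of_lt_of_le one_pos hq
  have h1 : ⟪gp, y - x⟫ ≤ moreauYosida φ p y - moreauYosida φ p x :=
    grad_ineq (my_convex hconv hLip hp0) hgp y
  have h2 : ⟪gq, x - y⟫ ≤ moreauYosida φ q x - moreauYosida φ q y :=
    grad_ineq (my_convex hconv hLip hq0) hgq x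
  have h3 : moreauYosida φ p y ≤ φ y := my_le hLip hp0 y
  have h4 : φ x - (L : ℝ) ^ 2 / (2 * p) ≤ moreauYosida φ p x := my_ge hLip hp0 x
  have h5 : moreauYosida φ q x ≤ φ x := my_le hLip hq0 x
  have h6 : φ y - (L : ℝ) ^ 2 / (2 * q) ≤ moreauYosida φ q y := my_ge hLip hq0 y
  have e1 : ⟪gp - gq, x - y⟫ = -⟪gp, y - x⟫ - ⟪gq, x - y⟫ := by
    rw [inner_sub_left]
    have : (y - x : EuclideanSpace ℝ (Fin n)) = -(x - y) := by abel
    rw [this, inner_neg_right]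
    ring
  rw [e1]
  have e2 : (L : ℝ) ^ 2 / (2 * p) = (L : ℝ) ^ 2 / 2 * (1 / p) := by ring
  have e3 : (L : ℝ) ^ 2 / (2 * q) = (L : ℝ) ^ 2 / 2 * (1 / q) := by ring
  nlinarith [h1, h2, h3, h4, h5, h6]

end Aux

open RealInnerProductSpace in
/-- Cauchy estimate for penalized solutions: if `φ` is convex and `L`-Lipschitz, `b` is
Lipschitz, `f` is continuous, and for each `p ≥ 1` the function `x^p` solves
`ẋ^p + ∇φ_p(x^p) = b(x^p) + f` with `x^p(0) = x₀` (where `∇φ_p` is the gradient of the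
Moreau–Yosida regularization `φ_p`), then there is a constant `C_T > 0` such that
`sup_{0≤t≤T} ‖x^p(t) − x^q(t)‖² ≤ C_T (1/p + 1/q)` for all `p, q ≥ 1`. -/
theorem penalized_cauchy_estimate {n : ℕ} (T : ℝ) (hT : 0 < T)
    (f : ℝ → EuclideanSpace ℝ (Fin n)) (hf : ContinuousOn f (Icc 0 T))
    (b : EuclideanSpace ℝ (Fin n) → EuclideanSpace ℝ (Fin n))
    (Lb : NNReal) (hb : LipschitzWith Lb b)
    (φ : EuclideanSpace ℝ (Fin n) → ℝ) (hconv : ConvexOn ℝ univ φ)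
    (L : NNReal) (hLip : LipschitzWith L φ)
    (g : ℝ → EuclideanSpace ℝ (Fin n) → EuclideanSpace ℝ (Fin n))
    (hgrad : ∀ p : ℝ, 1 ≤ p → ∀ x, HasGradientAt (moreauYosida φ p) (g p x) x)
    (x₀ : EuclideanSpace ℝ (Fin n))
    (X : ℝ → ℝ → EuclideanSpace ℝ (Fin n))
    (hX0 : ∀ p : ℝ, 1 ≤ p → X p 0 = x₀)
    (hXode : ∀ p : ℝ, 1 ≤ p → ∀ t ∈ Icc (0 : ℝ) T,
      HasDerivWithinAt (X p) (b (X p t) + f t - g p (X p t)) (Icc 0 T) t) :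
    ∃ C > (0 : ℝ), ∀ p q : ℝ, 1 ≤ p → 1 ≤ q → ∀ t ∈ Icc (0 : ℝ) T,
      ‖X p t - X q t‖ ^ 2 ≤ C * (1 / p + 1 / q) := by
  set K : ℝ := 2 * (Lb : ℝ) + 1 with hKdef
  have hK : 0 < K := by positivity
  have hexp : 1 < Real.exp (K * T) := by
    have h0 : Real.exp 0 < Real.exp (K * T) := Real.exp_lt_exp.2 (by positivity)
    simpa using h0
  set C : ℝ := ((L : ℝ) ^ 2 + 1) / K * (Real.exp (K * T) - 1) with hCdef
  have hC : 0 < C := by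
    apply mul_pos
    · positivity
    · linarith
  refine ⟨C, hC, ?_⟩
  intro p q hp hq
  have hp0 : (0 : ℝ) < p := lt_of_lt_of_le one_pos hp
  have hq0 : (0 : ℝ) < q := lt_of_lt_of_le one_pos hq
  set ε : ℝ := ((L : ℝ) ^ 2 + 1) * (1 / p + 1 / q) with hεdef
  have hε : 0 ≤ ε := by positivity
  set u : ℝ → EuclideanSpace ℝ (Fin n) := fun t => X p t - X q t with hu
  set u' : ℝ → EuclideanSpace ℝ (Fin n) :=
    fun t => (b (X p t) - b (X q t)) - (g p (X p t) - g q (X q t)) with hu'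
  have hud : ∀ t ∈ Icc (0 : ℝ) T, HasDerivWithinAt u (u' t) (Icc 0 T) t := by
    intro t ht
    have h := (hXode p hp t ht).sub (hXode q hq t ht)
    refine h.congr_deriv ?_
    simp only [hu']
    abel
  set v : ℝ → ℝ := fun t => ‖u t‖ ^ 2 with hv
  set v' : ℝ → ℝ := fun t => 2 * ⟪u' t, u t⟫ with hvd'
  have hvd : ∀ t ∈ Icc (0 : ℝ) T, HasDerivWithinAt v (v' t) (Icc 0 T) t := by
    intro t ht
    have h := HasDerivWithinAt.inner ℝ (hud t ht) (hud t ht)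
    have heq : (fun t => (⟪u t, u t⟫ : ℝ)) = v := by
      funext s
      exact real_inner_self_eq_norm_sq (u s)
    rw [heq] at h
    refine h.congr_deriv ?_
    simp only [hvd', real_inner_comm (u' t) (u t)]
    ring
  have hcont : ContinuousOn v (Icc 0 T) := fun t ht => (hvd t ht).continuousWithinAt
  have key := le_gronwallBound_of_liminf_deriv_right_le (f := v) (f' := v')
    (δ := 0) (K := K) (ε := ε) (a := 0) (b := T) hcont
    (fun t ht r hr => by
      have hIcc : Icc (0 : ℝ) T ∈ 𝓝[Ici t] t := Icc_mem_nhdsGE_of_mem ht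
      have h := ((hvd t (Ico_subset_Icc_self ht)).mono_of_mem_nhdsWithin hIcc)
      exact h.liminf_right_slope_le hr)
    (by
      simp only [v, u, hX0 p hp, hX0 q hq, sub_self, norm_zero]
      norm_num)
    ?_
  · intro t ht
    have h := key t ht
    have hKne : K ≠ 0 := ne_of_gt hK
    rw [gronwallBound_of_K_ne_0 hKne] at h
    simp only [zero_mul, zero_add, sub_zero] at h
    have hmono : Real.exp (K * t) ≤ Real.exp (K * T) := by
      apply Real.exp_le_exp.2
      exact mul_le_mul_of_nonneg_left ht.2 hK.le
    have hεK : 0 ≤ ε / K := by positivity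
    have : ε / K * (Real.exp (K * t) - 1) ≤ ε / K * (Real.exp (K * T) - 1) := by
      apply mul_le_mul_of_nonneg_left _ hεK
      linarith
    have hfinal : v t ≤ C * (1 / p + 1 / q) := by
      have : v t ≤ ε / K * (Real.exp (K * T) - 1) := le_trans h this
      calc v t ≤ ε / K * (Real.exp (K * T) - 1) := this
        _ = C * (1 / p + 1 / q) := by rw [hCdef, hεdef]; ring
    exact hfinal
  · -- the derivative bound
    intro t ht
    have ht' : t ∈ Icc (0 : ℝ) T := Ico_subset_Icc_self ht
    have hbd : ⟪b (X p t) - b (X q t), u t⟫ ≤ (Lb : ℝ) * ‖u t‖ ^ 2 := by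
      have h1 : ⟪b (X p t) - b (X q t), u t⟫ ≤ ‖b (X p t) - b (X q t)‖ * ‖u t‖ :=
        real_inner_le_norm _ _
      have h2 : ‖b (X p t) - b (X q t)‖ ≤ (Lb : ℝ) * ‖u t‖ := by
        have := hb.dist_le_mul (X p t) (X q t)
        rw [dist_eq_norm, dist_eq_norm] at this
        exact this
      calc ⟪b (X p t) - b (X q t), u t⟫ ≤ ‖b (X p t) - b (X q t)‖ * ‖u t‖ := h1
        _ ≤ (Lb : ℝ) * ‖u t‖ * ‖u t‖ := by
            apply mul_le_mul_of_nonneg_right h2 (norm_nonneg _)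
        _ = (Lb : ℝ) * ‖u t‖ ^ 2 := by ring
    have hgd : -((L : ℝ) ^ 2 / 2) * (1 / p + 1 / q) ≤
        ⟪g p (X p t) - g q (X q t), u t⟫ :=
      my_mono hconv hLip hp hq (hgrad p hp (X p t)) (hgrad q hq (X q t))
    have hsplit : ⟪u' t, u t⟫ = ⟪b (X p t) - b (X q t), u t⟫ -
        ⟪g p (X p t) - g q (X q t), u t⟫ := by
      simp only [u']
      rw [inner_sub_left]
    have hvnn : 0 ≤ v t := sq_nonneg _
    have hsum : 0 ≤ 1 / p + 1 / q := by positivity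
    simp only [v']
    rw [hsplit]
    have : v t = ‖u t‖ ^ 2 := rfl
    nlinarith [hbd, hgd, hvnn, hsum, sq_nonneg ((L : ℝ))]
end

section
/- Uniform a priori bound for the penalized coupled system. Fix T > 0. Let f ∈ C([0,T]; ℝⁿ); let b^x : ℝⁿ × ℝᵐ → ℝⁿ and b^z : ℝⁿ × ℝᵐ → ℝᵐ be Lipschitz; let φ : ℝⁿ → ℝ be convex and L-Lipschitz with φ ≥ 0 = φ(0); let ψ : ℝᵐ → [0,+∞] be a proper lower semicontinuous convex function with ψ ≥ 0 = ψ(0). For p ≥ 1 let φ_p and ψ_p denote the Moreau–Yosida regularizations (assumed, as is the case, differentiable with gradients ∇φ_p, ∇ψ_p), and let (x^p, z^p) : [0,T] → ℝⁿ × ℝᵐ solve ẋ^p + ∇φ_p(x^p) = b^x(x^p, z^p) + f, x^p(0) = x₀, and ż^p + ∇ψ_p(z^p) = b^z(x^p, z^p), z^p(0) = z₀. Then there exists a constant C > 0, independent of p, such that for all t ∈ [0,T], sup_{0 ≤ s ≤ t} ( ‖x^p(s)‖² + ‖z^p(s)‖² ) ≤ C e^{C t}. -/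
open Set MeasureTheory

/-- The Moreau–Yosida regularization of an extended-real-valued function
(real-valued, as the infimum is finite for proper nonnegative `ψ`). -/
noncomputable def moreauYosidaE {m : ℕ} (ψ : EuclideanSpace ℝ (Fin m) → EReal) (p : ℝ)
    (x : EuclideanSpace ℝ (Fin m)) : ℝ :=
  (⨅ z : EuclideanSpace ℝ (Fin m), (ψ z + ((p / 2 * ‖x - z‖ ^ 2 : ℝ) : EReal))).toReal
open Filter
open scoped RealInnerProductSpace Topology

section helpers


lemma grad_inner_nonneg {E : Type*} [NormedAddCommGroup E] [InnerProductSpace ℝ E] [CompleteSpace E]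
    {g : E → ℝ} {G x : E}
    (hgrad : HasGradientAt g G x) (hx : 0 ≤ g x)
    (hscale : ∀ a : ℝ, 0 < a → a ≤ 1 → ∀ y : E, g (a • y) ≤ a * g y) :
    0 ≤ ⟪x, G⟫ := by
  set h : ℝ → ℝ := fun t => g (t • x) with hh
  have hc : HasDerivAt (fun t : ℝ => t • x) x 1 := by
    simpa using (hasDerivAt_id (1:ℝ)).smul_const x
  have hd : HasDerivAt h ⟪G, x⟫ 1 := by
    have := hgrad.hasFDerivAt
    rw [show x = (1:ℝ) • x by simp] at this
    have := this.comp_hasDerivAt 1 hc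
    exact this
  have hslope : ∀ t ∈ Ioi (1:ℝ), 0 ≤ slope h 1 t := by
    intro t ht
    rw [mem_Ioi] at ht
    have ht0 : (0:ℝ) < t := by linarith
    have h1 : h 1 = g x := by simp [hh]
    have hle : g x ≤ t⁻¹ * h t := by
      have := hscale t⁻¹ (by positivity) (by rw [inv_le_one_iff₀]; right; linarith) (t • x)
      rwa [smul_smul, inv_mul_cancel₀ ht0.ne', one_smul] at this
    have hle' : t * g x ≤ h t := (le_inv_mul_iff₀ ht0).mp hle
    rw [slope_def_field]
    apply div_nonneg _ (by linarith)
    rw [h1]; nlinarith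
  have htend : Tendsto (slope h 1) (𝓝[>] 1) (𝓝 ⟪G, x⟫) := by
    have := (hd.hasDerivWithinAt (s := Ioi 1))
    rw [hasDerivWithinAt_iff_tendsto_slope] at this
    simpa [Set.diff_singleton_eq_self (by simp : (1:ℝ) ∉ Ioi (1:ℝ))] using this
  have : 0 ≤ ⟪G, x⟫ :=
    ge_of_tendsto htend (eventually_nhdsWithin_of_forall hslope)
  rwa [real_inner_comm]

variable {n m : ℕ} {φ : EuclideanSpace ℝ (Fin n) → ℝ} {ψ : EuclideanSpace ℝ (Fin m) → EReal}
  {p : ℝ}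

lemma mY_bdd (hφ0 : ∀ x, 0 ≤ φ x) (hp : 0 ≤ p) (x : EuclideanSpace ℝ (Fin n)) :
    BddBelow (Set.range fun z => φ z + p / 2 * ‖x - z‖ ^ 2) := by
  refine ⟨0, ?_⟩
  rintro r ⟨z, rfl⟩
  exact add_nonneg (hφ0 z) (by positivity)

lemma mY_nonneg (hφ0 : ∀ x, 0 ≤ φ x) (hp : 0 ≤ p) (x : EuclideanSpace ℝ (Fin n)) :
    0 ≤ moreauYosida φ p x :=
  le_ciInf fun z => add_nonneg (hφ0 z) (by positivity)

lemma norm_smul_sq_le {E : Type*} [NormedAddCommGroup E] [NormedSpace ℝ E]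
    {a : ℝ} (ha : 0 ≤ a) (ha1 : a ≤ 1) (v : E) : ‖a • v‖ ^ 2 ≤ a * ‖v‖ ^ 2 := by
  rw [norm_smul, Real.norm_eq_abs, abs_of_nonneg ha]
  nlinarith [mul_nonneg (mul_nonneg ha (sub_nonneg.mpr ha1)) (sq_nonneg ‖v‖)]

lemma mY_scale (hφconv : ConvexOn ℝ univ φ) (hφ0 : ∀ x, 0 ≤ φ x) (hφzero : φ 0 = 0)
    (hp : 0 ≤ p) {a : ℝ} (ha : 0 < a) (ha1 : a ≤ 1) (y : EuclideanSpace ℝ (Fin n)) :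
    moreauYosida φ p (a • y) ≤ a * moreauYosida φ p y := by
  have key : ∀ z, moreauYosida φ p (a • y) ≤ a * (φ z + p / 2 * ‖y - z‖ ^ 2) := by
    intro z
    have h1 : moreauYosida φ p (a • y) ≤ φ (a • z) + p / 2 * ‖a • y - a • z‖ ^ 2 :=
      ciInf_le (mY_bdd hφ0 hp _) (a • z)
    have h2 : φ (a • z) ≤ a * φ z := by
      have := hφconv.2 (mem_univ z) (mem_univ (0 : EuclideanSpace ℝ (Fin n)))
        ha.le (by linarith : (0:ℝ) ≤ 1 - a) (by ring)
      simpa [hφzero] using this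
    have h3 : p / 2 * ‖a • y - a • z‖ ^ 2 ≤ a * (p / 2 * ‖y - z‖ ^ 2) := by
      rw [← smul_sub]
      have := norm_smul_sq_le ha.le ha1 (y - z)
      nlinarith
    calc moreauYosida φ p (a • y) ≤ φ (a • z) + p / 2 * ‖a • y - a • z‖ ^ 2 := h1
      _ ≤ a * φ z + a * (p / 2 * ‖y - z‖ ^ 2) := add_le_add h2 h3
      _ = a * (φ z + p / 2 * ‖y - z‖ ^ 2) := by ring
  have h4 : moreauYosida φ p (a • y) / a ≤ moreauYosida φ p y :=
    le_ciInf fun z => (div_le_iff₀ ha).mpr (by rw [mul_comm]; exact key z)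
  calc moreauYosida φ p (a • y) = a * (moreauYosida φ p (a • y) / a) := by
        field_simp
    _ ≤ a * moreauYosida φ p y := by
        exact mul_le_mul_of_nonneg_left h4 ha.le

lemma mYE_inf_nonneg (hψ0 : ∀ z, 0 ≤ ψ z) (hp : 0 ≤ p) (x : EuclideanSpace ℝ (Fin m)) :
    (0 : EReal) ≤ ⨅ z, ψ z + ((p / 2 * ‖x - z‖ ^ 2 : ℝ) : EReal) :=
  le_iInf fun z => add_nonneg (hψ0 z)
    (by exact_mod_cast (by positivity : (0:ℝ) ≤ p / 2 * ‖x - z‖ ^ 2))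

lemma mYE_inf_le (hψzero : ψ 0 = 0) (x : EuclideanSpace ℝ (Fin m)) :
    (⨅ z, ψ z + ((p / 2 * ‖x - z‖ ^ 2 : ℝ) : EReal)) ≤ ((p / 2 * ‖x‖ ^ 2 : ℝ) : EReal) := by
  have := iInf_le (fun z => ψ z + ((p / 2 * ‖x - z‖ ^ 2 : ℝ) : EReal)) 0
  simpa [hψzero] using this

lemma mYE_coe (hψ0 : ∀ z, 0 ≤ ψ z) (hψzero : ψ 0 = 0) (hp : 0 ≤ p)
    (x : EuclideanSpace ℝ (Fin m)) :
    ((moreauYosidaE ψ p x : ℝ) : EReal) = ⨅ z, ψ z + ((p / 2 * ‖x - z‖ ^ 2 : ℝ) : EReal) := by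
  apply EReal.coe_toReal
  · exact ((mYE_inf_le hψzero x).trans_lt (EReal.coe_lt_top _)).ne
  · exact ((bot_lt_iff_ne_bot.mpr (by simp)).trans_le (mYE_inf_nonneg hψ0 hp x)).ne'

lemma EReal_toReal_nonneg {x : EReal} (h : 0 ≤ x) (hx : x ≠ ⊤) : 0 ≤ x.toReal := by
  have := EReal.toReal_le_toReal h (by simp) hx
  simpa using this

lemma mYE_nonneg (hψ0 : ∀ z, 0 ≤ ψ z) (hψzero : ψ 0 = 0) (hp : 0 ≤ p)
    (x : EuclideanSpace ℝ (Fin m)) :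
    0 ≤ moreauYosidaE ψ p x :=
  EReal_toReal_nonneg (mYE_inf_nonneg hψ0 hp x)
    ((mYE_inf_le hψzero x).trans_lt (EReal.coe_lt_top _)).ne

lemma mYE_scale (hψ0 : ∀ z, 0 ≤ ψ z) (hψzero : ψ 0 = 0)
    (hψconv : ∀ z w : EuclideanSpace ℝ (Fin m), ∀ a b : ℝ, 0 ≤ a → 0 ≤ b → a + b = 1 →
      ψ (a • z + b • w) ≤ (a : EReal) * ψ z + (b : EReal) * ψ w)
    (hp : 0 ≤ p) {a : ℝ} (ha : 0 < a) (ha1 : a ≤ 1) (y : EuclideanSpace ℝ (Fin m)) :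
    moreauYosidaE ψ p (a • y) ≤ a * moreauYosidaE ψ p y := by
  apply le_of_forall_pos_le_add
  intro ε hε
  have hlt : (⨅ z, ψ z + ((p / 2 * ‖y - z‖ ^ 2 : ℝ) : EReal))
      < ((moreauYosidaE ψ p y + ε : ℝ) : EReal) := by
    rw [← mYE_coe hψ0 hψzero hp y]
    exact_mod_cast lt_add_of_pos_right _ hε
  obtain ⟨z, hz⟩ := iInf_lt_iff.mp hlt
  have hzt : ψ z ≠ ⊤ := by
    intro h
    rw [h, EReal.top_add_of_ne_bot (EReal.coe_ne_bot _)] at hz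
    exact (not_top_lt hz)
  have hzb : ψ z ≠ ⊥ := ((bot_lt_iff_ne_bot.mpr (by simp)).trans_le (hψ0 z)).ne'
  set r := (ψ z).toReal with hrdef
  have hr : ψ z = (r : EReal) := (EReal.coe_toReal hzt hzb).symm
  have hrpos : 0 ≤ r := EReal_toReal_nonneg (hψ0 z) hzt
  have hz' : r + p / 2 * ‖y - z‖ ^ 2 < moreauYosidaE ψ p y + ε := by
    rw [hr, ← EReal.coe_add] at hz
    exact_mod_cast hz
  have h2 : ψ (a • z) ≤ ((a * r : ℝ) : EReal) := by
    have := hψconv z 0 a (1 - a) ha.le (by linarith) (by ring)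
    rw [hψzero, mul_zero, add_zero, smul_zero, add_zero, hr, ← EReal.coe_mul] at this
    exact this
  have h3 : (p / 2 * ‖a • y - a • z‖ ^ 2 : ℝ) ≤ a * (p / 2 * ‖y - z‖ ^ 2) := by
    rw [← smul_sub]
    have := norm_smul_sq_le ha.le ha1 (y - z)
    nlinarith
  have h1 : (⨅ w, ψ w + ((p / 2 * ‖a • y - w‖ ^ 2 : ℝ) : EReal))
      ≤ ((a * (moreauYosidaE ψ p y + ε) : ℝ) : EReal) := by
    refine (iInf_le _ (a • z)).trans ?_
    calc ψ (a • z) + ((p / 2 * ‖a • y - a • z‖ ^ 2 : ℝ) : EReal)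
        ≤ ((a * r : ℝ) : EReal) + ((a * (p / 2 * ‖y - z‖ ^ 2) : ℝ) : EReal) :=
          add_le_add h2 (by exact_mod_cast h3)
      _ = ((a * r + a * (p / 2 * ‖y - z‖ ^ 2) : ℝ) : EReal) := by rw [← EReal.coe_add]
      _ ≤ ((a * (moreauYosidaE ψ p y + ε) : ℝ) : EReal) := by
          exact_mod_cast by nlinarith
  have h4 : moreauYosidaE ψ p (a • y) ≤ a * (moreauYosidaE ψ p y + ε) := by
    have := EReal.toReal_le_toReal h1
      (((bot_lt_iff_ne_bot.mpr (by simp)).trans_le (mYE_inf_nonneg hψ0 hp _)).ne')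
      (EReal.coe_ne_top _)
    rw [EReal.toReal_coe] at this
    exact this
  nlinarith [mYE_nonneg (ψ := ψ) (p := p) hψ0 hψzero hp y]

lemma arith_bound (Lx Lz B B' M a b : ℝ) (hLx : 0 ≤ Lx) (hLz : 0 ≤ Lz) (hB : 0 ≤ B)
    (hB' : 0 ≤ B') (hM : 0 ≤ M) (ha : 0 ≤ a) (hb : 0 ≤ b) :
    2 * ((Lx * (a + b) + B) * a + M * a) + 2 * ((Lz * (a + b) + B') * b)
      ≤ 4 * (Lx + Lz + B + B' + M + 1) * (a ^ 2 + b ^ 2) + 4 * (Lx + Lz + B + B' + M + 1) := by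
  nlinarith [mul_nonneg hLx (sq_nonneg (a - b)), mul_nonneg hLz (sq_nonneg (a - b)),
    mul_nonneg hB (sq_nonneg (a - 1)), mul_nonneg hM (sq_nonneg (a - 1)),
    mul_nonneg hB' (sq_nonneg (b - 1)), mul_nonneg hLx (sq_nonneg b),
    mul_nonneg hLz (sq_nonneg a), mul_nonneg hB (sq_nonneg b), mul_nonneg hM (sq_nonneg b),
    mul_nonneg hB' (sq_nonneg a), sq_nonneg a, sq_nonneg b, mul_nonneg ha hb]

end helpers

/-- Uniform a priori bound for the penalized coupled system: if `(x^p, z^p)` solves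
`ẋ^p + ∇φ_p(x^p) = bˣ(x^p,z^p) + f`, `x^p(0) = x₀`, `ż^p + ∇ψ_p(z^p) = bᶻ(x^p,z^p)`,
`z^p(0) = z₀`, then there is `C > 0` independent of `p` such that
`sup_{0≤s≤t} (‖x^p(s)‖² + ‖z^p(s)‖²) ≤ C e^{Ct}` for all `t ∈ [0,T]`. -/
theorem penalized_coupled_apriori_bound {n m : ℕ} (T : ℝ) (hT : 0 < T)
    (f : ℝ → EuclideanSpace ℝ (Fin n)) (hf : ContinuousOn f (Icc 0 T))
    (bx : EuclideanSpace ℝ (Fin n) × EuclideanSpace ℝ (Fin m) → EuclideanSpace ℝ (Fin n))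
    (bz : EuclideanSpace ℝ (Fin n) × EuclideanSpace ℝ (Fin m) → EuclideanSpace ℝ (Fin m))
    (hbx : ∃ Lx : NNReal, LipschitzWith Lx bx) (hbz : ∃ Lz : NNReal, LipschitzWith Lz bz)
    (φ : EuclideanSpace ℝ (Fin n) → ℝ) (hφconv : ConvexOn ℝ univ φ)
    (L : NNReal) (hφLip : LipschitzWith L φ) (hφ0 : ∀ x, 0 ≤ φ x) (hφzero : φ 0 = 0)
    (ψ : EuclideanSpace ℝ (Fin m) → EReal)
    (hψ0 : ∀ z, 0 ≤ ψ z) (hψzero : ψ 0 = 0) (hψproper : ∃ z, ψ z ≠ ⊤)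
    (hψlsc : LowerSemicontinuous ψ)
    (hψconv : ∀ z w : EuclideanSpace ℝ (Fin m), ∀ a b : ℝ, 0 ≤ a → 0 ≤ b → a + b = 1 →
      ψ (a • z + b • w) ≤ (a : EReal) * ψ z + (b : EReal) * ψ w)
    (gφ : ℝ → EuclideanSpace ℝ (Fin n) → EuclideanSpace ℝ (Fin n))
    (gψ : ℝ → EuclideanSpace ℝ (Fin m) → EuclideanSpace ℝ (Fin m))
    (hgφ : ∀ p : ℝ, 1 ≤ p → ∀ x, HasGradientAt (moreauYosida φ p) (gφ p x) x)
    (hgψ : ∀ p : ℝ, 1 ≤ p → ∀ x, HasGradientAt (moreauYosidaE ψ p) (gψ p x) x)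
    (x₀ : EuclideanSpace ℝ (Fin n)) (z₀ : EuclideanSpace ℝ (Fin m))
    (X : ℝ → ℝ → EuclideanSpace ℝ (Fin n)) (Z : ℝ → ℝ → EuclideanSpace ℝ (Fin m))
    (hX0 : ∀ p : ℝ, 1 ≤ p → X p 0 = x₀) (hZ0 : ∀ p : ℝ, 1 ≤ p → Z p 0 = z₀)
    (hXode : ∀ p : ℝ, 1 ≤ p → ∀ t ∈ Icc (0 : ℝ) T,
      HasDerivWithinAt (X p) (bx (X p t, Z p t) + f t - gφ p (X p t)) (Icc 0 T) t)
    (hZode : ∀ p : ℝ, 1 ≤ p → ∀ t ∈ Icc (0 : ℝ) T,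
      HasDerivWithinAt (Z p) (bz (X p t, Z p t) - gψ p (Z p t)) (Icc 0 T) t) :
    ∃ C > (0 : ℝ), ∀ p : ℝ, 1 ≤ p → ∀ t ∈ Icc (0 : ℝ) T, ∀ s ∈ Icc (0 : ℝ) t,
      ‖X p s‖ ^ 2 + ‖Z p s‖ ^ 2 ≤ C * Real.exp (C * t) := by
  classical
  obtain ⟨Lx, hLx⟩ := hbx
  obtain ⟨Lz, hLz⟩ := hbz
  obtain ⟨M0, hM0⟩ := isCompact_Icc.exists_bound_of_continuousOn hf
  set M : ℝ := max M0 0 with hMdef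
  have hM : ∀ r ∈ Icc (0:ℝ) T, ‖f r‖ ≤ M := fun r hr => (hM0 r hr).trans (le_max_left _ _)
  have hMpos : 0 ≤ M := le_max_right _ _
  set B : ℝ := ‖bx (0, 0)‖ with hBdef
  set B' : ℝ := ‖bz (0, 0)‖ with hB'def
  set K : ℝ := 4 * ((Lx : ℝ) + (Lz : ℝ) + B + B' + M + 1) with hKdef
  have hKpos : 0 < K := by positivity
  set u0 : ℝ := ‖x₀‖ ^ 2 + ‖z₀‖ ^ 2 with hu0def
  have hu0 : 0 ≤ u0 := by positivity
  refine ⟨max K (u0 + 1), lt_of_lt_of_le hKpos (le_max_left _ _), ?_⟩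
  set C : ℝ := max K (u0 + 1) with hCdef
  have hCK : K ≤ C := le_max_left _ _
  have hCu : u0 + 1 ≤ C := le_max_right _ _
  have hCpos : 0 < C := lt_of_lt_of_le hKpos hCK
  intro p hp t ht s hs
  have hp0 : (0:ℝ) ≤ p := by linarith
  have hsT : s ∈ Icc (0:ℝ) T := ⟨hs.1, hs.2.trans ht.2⟩
  -- the energy function and its derivative
  set u : ℝ → ℝ := fun r => ⟪X p r, X p r⟫ + ⟪Z p r, Z p r⟫ with hudef
  set ud : ℝ → ℝ := fun r =>
    2 * ⟪bx (X p r, Z p r) + f r - gφ p (X p r), X p r⟫ +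
    2 * ⟪bz (X p r, Z p r) - gψ p (Z p r), Z p r⟫ with huddef
  have hu : ∀ r ∈ Icc (0:ℝ) T, HasDerivWithinAt u (ud r) (Icc 0 T) r := by
    intro r hr
    have h1 := (hXode p hp r hr).inner (𝕜 := ℝ) (hXode p hp r hr)
    have h2 := (hZode p hp r hr).inner (𝕜 := ℝ) (hZode p hp r hr)
    have h3 := h1.add h2
    refine h3.congr_deriv ?_
    simp only [huddef]
    rw [real_inner_comm (X p r), real_inner_comm (Z p r)]
    ring
  have hueq : ∀ r, u r = ‖X p r‖ ^ 2 + ‖Z p r‖ ^ 2 := by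
    intro r
    simp only [hudef, real_inner_self_eq_norm_sq]
  -- derivative bound
  have hbound : ∀ r ∈ Ico (0:ℝ) T, ud r ≤ K * u r + K := by
    intro r hr
    have hrIcc : r ∈ Icc (0:ℝ) T := ⟨hr.1, hr.2.le⟩
    set a : ℝ := ‖X p r‖ with hadef
    set b : ℝ := ‖Z p r‖ with hbdef
    have ha0 : 0 ≤ a := norm_nonneg _
    have hb0 : 0 ≤ b := norm_nonneg _
    -- gradient positivity
    have hgx : 0 ≤ ⟪X p r, gφ p (X p r)⟫ :=
      grad_inner_nonneg (hgφ p hp (X p r)) (mY_nonneg hφ0 hp0 _)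
        (fun c hc hc1 y => mY_scale hφconv hφ0 hφzero hp0 hc hc1 y)
    have hgz : 0 ≤ ⟪Z p r, gψ p (Z p r)⟫ :=
      grad_inner_nonneg (hgψ p hp (Z p r)) (mYE_nonneg hψ0 hψzero hp0 _)
        (fun c hc hc1 y => mYE_scale hψ0 hψzero hψconv hp0 hc hc1 y)
    -- Lipschitz bounds on bx, bz
    have hdistle : dist (X p r, Z p r) ((0 : EuclideanSpace ℝ (Fin n)),
        (0 : EuclideanSpace ℝ (Fin m))) ≤ a + b := by
      rw [Prod.dist_eq]
      simp only [dist_zero_right]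
      exact max_le (by linarith) (by linarith)
    have hbx1 : ‖bx (X p r, Z p r)‖ ≤ (Lx : ℝ) * (a + b) + B := by
      have h := hLx.dist_le_mul (X p r, Z p r) (0, 0)
      rw [dist_eq_norm] at h
      have h2 : ‖bx (X p r, Z p r)‖ ≤ ‖bx (X p r, Z p r) - bx (0, 0)‖ + B := by
        have := norm_sub_norm_le (bx (X p r, Z p r)) (bx (0, 0))
        simp only [hBdef]
        linarith
      have h3 : (Lx : ℝ) * dist (X p r, Z p r) ((0 : EuclideanSpace ℝ (Fin n)),
          (0 : EuclideanSpace ℝ (Fin m))) ≤ (Lx : ℝ) * (a + b) :=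
        mul_le_mul_of_nonneg_left hdistle Lx.2
      linarith
    have hbz1 : ‖bz (X p r, Z p r)‖ ≤ (Lz : ℝ) * (a + b) + B' := by
      have h := hLz.dist_le_mul (X p r, Z p r) (0, 0)
      rw [dist_eq_norm] at h
      have h2 : ‖bz (X p r, Z p r)‖ ≤ ‖bz (X p r, Z p r) - bz (0, 0)‖ + B' := by
        have := norm_sub_norm_le (bz (X p r, Z p r)) (bz (0, 0))
        simp only [hB'def]
        linarith
      have h3 : (Lz : ℝ) * dist (X p r, Z p r) ((0 : EuclideanSpace ℝ (Fin n)),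
          (0 : EuclideanSpace ℝ (Fin m))) ≤ (Lz : ℝ) * (a + b) :=
        mul_le_mul_of_nonneg_left hdistle Lz.2
      linarith
    -- inner product bounds
    have hix : ⟪bx (X p r, Z p r) + f r - gφ p (X p r), X p r⟫
        ≤ ((Lx : ℝ) * (a + b) + B) * a + M * a := by
      rw [inner_sub_left, inner_add_left]
      have e1 : ⟪bx (X p r, Z p r), X p r⟫ ≤ ((Lx : ℝ) * (a + b) + B) * a :=
        (real_inner_le_norm _ _).trans
          (mul_le_mul_of_nonneg_right hbx1 ha0)
      have e2 : ⟪f r, X p r⟫ ≤ M * a :=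
        (real_inner_le_norm _ _).trans
          (mul_le_mul_of_nonneg_right (hM r hrIcc) ha0)
      have hgx' : (0:ℝ) ≤ ⟪gφ p (X p r), X p r⟫ := by
        rw [real_inner_comm]; exact hgx
      linarith
    have hiz : ⟪bz (X p r, Z p r) - gψ p (Z p r), Z p r⟫
        ≤ ((Lz : ℝ) * (a + b) + B') * b := by
      rw [inner_sub_left]
      have e1 : ⟪bz (X p r, Z p r), Z p r⟫ ≤ ((Lz : ℝ) * (a + b) + B') * b :=
        (real_inner_le_norm _ _).trans
          (mul_le_mul_of_nonneg_right hbz1 hb0)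
      have hgz' : (0:ℝ) ≤ ⟪gψ p (Z p r), Z p r⟫ := by
        rw [real_inner_comm]; exact hgz
      linarith
    have hua : u r = a ^ 2 + b ^ 2 := hueq r
    have hLx0 : (0:ℝ) ≤ Lx := Lx.2
    have hLz0 : (0:ℝ) ≤ Lz := Lz.2
    have hB0 : 0 ≤ B := norm_nonneg _
    have hB'0 : 0 ≤ B' := norm_nonneg _
    have : ud r ≤ 2 * (((Lx : ℝ) * (a + b) + B) * a + M * a)
        + 2 * (((Lz : ℝ) * (a + b) + B') * b) := by
      simp only [huddef]
      linarith
    have harith := arith_bound (Lx : ℝ) (Lz : ℝ) B B' M a b hLx0 hLz0 hB0 hB'0 hMpos ha0 hb0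
    rw [hua, hKdef]
    linarith
  -- continuity
  have hcont : ContinuousOn u (Icc 0 T) := fun r hr => (hu r hr).continuousWithinAt
  -- slope condition
  have hslope : ∀ r ∈ Ico (0:ℝ) T, ∀ q, ud r < q →
      ∃ᶠ w in 𝓝[>] r, (w - r)⁻¹ * (u w - u r) < q := by
    intro r hr q hq
    have hD : HasDerivWithinAt u (ud r) (Icc r T) r :=
      (hu r ⟨hr.1, hr.2.le⟩).mono (Icc_subset_Icc hr.1 le_rfl)
    rw [hasDerivWithinAt_iff_tendsto_slope] at hD
    rw [Icc_diff_left, nhdsWithin_Ioc_eq_nhdsGT hr.2] at hD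
    have hev : ∀ᶠ w in 𝓝[>] r, slope u r w < q := hD.eventually_lt_const hq
    refine hev.frequently.mono ?_
    intro w hw
    rwa [slope_def_field, div_eq_inv_mul] at hw
  -- initial value
  have hu0eq : u 0 ≤ u0 := by
    rw [hueq 0, hX0 p hp, hZ0 p hp, hu0def]
  -- Gronwall
  have hgron := le_gronwallBound_of_liminf_deriv_right_le hcont hslope hu0eq hbound
  have hus : u s ≤ gronwallBound u0 K K (s - 0) := hgron s hsT
  rw [sub_zero, gronwallBound_of_K_ne_0 hKpos.ne'] at hus
  rw [div_self hKpos.ne'] at hus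
  have hexple : Real.exp (K * s) ≤ Real.exp (C * t) := by
    apply Real.exp_le_exp.mpr
    have h1 : K * s ≤ C * s := mul_le_mul_of_nonneg_right hCK hs.1
    have h2 : C * s ≤ C * t := mul_le_mul_of_nonneg_left hs.2 hCpos.le
    linarith
  have hfin : u s ≤ C * Real.exp (C * t) := by
    have hus' : u s ≤ u0 * Real.exp (K * s) + 1 * (Real.exp (K * s) - 1) := hus
    have h1 : u s ≤ (u0 + 1) * Real.exp (K * s) := by nlinarith [Real.exp_pos (K * s)]
    have h2 : (u0 + 1) * Real.exp (K * s) ≤ C * Real.exp (C * t) := by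
      have := Real.exp_pos (K * s)
      nlinarith [hexple, Real.exp_pos (C * t)]
    linarith
  rw [← hueq s]
  exact hfin
end

section
/- Energy estimate along the penalized flow. In the setting of the penalized coupled system (φ : ℝⁿ → ℝ convex L-Lipschitz with φ ≥ 0 = φ(0); ψ : ℝᵐ → [0,+∞] proper lsc convex with ψ ≥ 0 = ψ(0); b^x, b^z Lipschitz; f ∈ C([0,T];ℝⁿ); (x^p, z^p) solving ẋ^p + ∇φ_p(x^p) = b^x(x^p,z^p) + f, x^p(0)=x₀, and ż^p + ∇ψ_p(z^p) = b^z(x^p,z^p), z^p(0)=z₀), the following hold for every p ≥ 1 and every t ∈ [0,T]: (i) ψ_p(z^p(t)) + (1/2) ∫₀ᵗ ‖∇ψ_p(z^p(s))‖² ds ≤ ψ_p(z₀) + (1/2) ∫₀ᵗ ‖b^z(x^p(s), z^p(s))‖² ds; and (ii) if in addition ψ(z₀) < ∞, then sup_{p ≥ 1} ∫₀^T ‖∇ψ_p(z^p(s))‖² ds < ∞. -/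
open Set MeasureTheory intervalIntegral Filter Topology
open scoped RealInnerProductSpace

section Aux
variable {E : Type*} [NormedAddCommGroup E] [InnerProductSpace ℝ E]

lemma norm_combo_eq (u v : E) {a b : ℝ} (hab : a + b = 1) :
    ‖a • u + b • v‖ ^ 2 = a * ‖u‖ ^ 2 + b * ‖v‖ ^ 2 - a * b * ‖u - v‖ ^ 2 := by
  have h1 : ‖a • u + b • v‖ ^ 2 = ⟪a • u + b • v, a • u + b • v⟫ :=
    (real_inner_self_eq_norm_sq _).symm
  have h2 : ‖u - v‖ ^ 2 = ⟪u - v, u - v⟫ := (real_inner_self_eq_norm_sq _).symm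
  have h3 : ‖u‖ ^ 2 = ⟪u, u⟫ := (real_inner_self_eq_norm_sq _).symm
  have h4 : ‖v‖ ^ 2 = ⟪v, v⟫ := (real_inner_self_eq_norm_sq _).symm
  have hc : (⟪v, u⟫ : ℝ) = ⟪u, v⟫ := real_inner_comm u v
  simp only [inner_add_left, inner_add_right, inner_sub_left, inner_sub_right,
    real_inner_smul_left, real_inner_smul_right, hc] at h1 h2
  rw [h1, h2, h3, h4]
  linear_combination (a * (⟪u, u⟫ : ℝ) + b * (⟪v, v⟫ : ℝ)) * hab

lemma norm_combo_le (u v : E) {a b : ℝ} (ha : 0 ≤ a) (hb : 0 ≤ b) (hab : a + b = 1) :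
    ‖a • u + b • v‖ ^ 2 ≤ a * ‖u‖ ^ 2 + b * ‖v‖ ^ 2 := by
  rw [norm_combo_eq u v hab]
  nlinarith [sq_nonneg ‖u - v‖, mul_nonneg ha hb]
end Aux

section MY
variable {m : ℕ} {ψ : EuclideanSpace ℝ (Fin m) → EReal} {p : ℝ}

lemma moreauYosidaE_eq (hp : 0 ≤ p) (hψ0 : ∀ z, 0 ≤ ψ z) (hproper : ∃ z, ψ z ≠ ⊤)
    (x : EuclideanSpace ℝ (Fin m)) :
    moreauYosidaE ψ p x
      = ⨅ z : {z : EuclideanSpace ℝ (Fin m) // ψ z ≠ ⊤},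
          ((ψ z.1).toReal + p / 2 * ‖x - z.1‖ ^ 2) := by
  haveI : Nonempty {z : EuclideanSpace ℝ (Fin m) // ψ z ≠ ⊤} :=
    ⟨⟨hproper.choose, hproper.choose_spec⟩⟩
  set g : {z : EuclideanSpace ℝ (Fin m) // ψ z ≠ ⊤} → ℝ :=
    fun z => (ψ z.1).toReal + p / 2 * ‖x - z.1‖ ^ 2 with hg
  have hcoe : ∀ z : {z : EuclideanSpace ℝ (Fin m) // ψ z ≠ ⊤},
      ψ z.1 + ((p / 2 * ‖x - z.1‖ ^ 2 : ℝ) : EReal) = ((g z : ℝ) : EReal) := by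
    intro z
    have hbot : ψ z.1 ≠ ⊥ := ne_of_gt (lt_of_lt_of_le EReal.bot_lt_zero (hψ0 z.1))
    rw [hg, EReal.coe_add, EReal.coe_toReal z.2 hbot]
  have h1 : (⨅ z : EuclideanSpace ℝ (Fin m), (ψ z + ((p / 2 * ‖x - z‖ ^ 2 : ℝ) : EReal)))
      = ⨅ z : {z : EuclideanSpace ℝ (Fin m) // ψ z ≠ ⊤}, ((g z : ℝ) : EReal) := by
    apply le_antisymm
    · exact le_iInf fun z => iInf_le_of_le z.1 (le_of_eq (hcoe z))
    · refine le_iInf fun z => ?_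
      by_cases hz : ψ z = ⊤
      · rw [hz, EReal.top_add_of_ne_bot (EReal.coe_ne_bot _)]
        exact le_top
      · exact iInf_le_of_le ⟨z, hz⟩ (le_of_eq (hcoe ⟨z, hz⟩).symm)
  have hbdd : BddBelow (Set.range g) := by
    refine ⟨0, ?_⟩
    rintro r ⟨z, rfl⟩
    have h0 : (0 : ℝ) ≤ (ψ z.1).toReal := by
      have := EReal.toReal_le_toReal (hψ0 z.1) (EReal.coe_ne_bot 0) z.2
      simpa using this
    simp only [hg]
    nlinarith [sq_nonneg ‖x - z.1‖, hp, h0]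
  have h2 : ((⨅ z, g z : ℝ) : EReal) = ⨅ z, ((g z : ℝ) : EReal) :=
    Monotone.map_ciInf_of_continuousAt (continuous_coe_real_ereal.continuousAt)
      (fun a b h => EReal.coe_le_coe_iff.2 h) hbdd
  rw [moreauYosidaE, h1, ← h2, EReal.toReal_coe]


variable {n : ℕ} {φ : EuclideanSpace ℝ (Fin n) → ℝ}

lemma moreauYosida_bdd (hp : 0 ≤ p) (hφ0 : ∀ x, 0 ≤ φ x) (x : EuclideanSpace ℝ (Fin n)) :
    BddBelow (Set.range fun z : EuclideanSpace ℝ (Fin n) => φ z + p / 2 * ‖x - z‖ ^ 2) := by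
  refine ⟨0, ?_⟩
  rintro r ⟨z, rfl⟩
  have := hφ0 z
  nlinarith [sq_nonneg ‖x - z‖]

lemma moreauYosida_le (hp : 0 ≤ p) (hφ0 : ∀ x, 0 ≤ φ x) (x z : EuclideanSpace ℝ (Fin n)) :
    moreauYosida φ p x ≤ φ z + p / 2 * ‖x - z‖ ^ 2 :=
  ciInf_le (moreauYosida_bdd hp hφ0 x) z

lemma moreauYosida_nonneg (hp : 0 ≤ p) (hφ0 : ∀ x, 0 ≤ φ x) (x : EuclideanSpace ℝ (Fin n)) :
    0 ≤ moreauYosida φ p x :=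
  le_ciInf fun z => by have := hφ0 z; nlinarith [sq_nonneg ‖x - z‖]

lemma moreauYosida_segment (hp : 0 ≤ p) (hφconv : ConvexOn ℝ Set.univ φ)
    (hφ0 : ∀ x, 0 ≤ φ x) (x y : EuclideanSpace ℝ (Fin n)) {t : ℝ} (ht : t ∈ Set.Icc (0:ℝ) 1) :
    moreauYosida φ p (x + t • (y - x))
      ≤ moreauYosida φ p x + t * (moreauYosida φ p y - moreauYosida φ p x) := by
  set a : ℝ := 1 - t with ha'
  set b : ℝ := t with hb'
  have ha : 0 ≤ a := by simp [ha']; exact ht.2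
  have hb : 0 ≤ b := ht.1
  have hab : a + b = 1 := by simp [ha', hb']
  have hmid : x + t • (y - x) = a • x + b • y := by rw [ha', hb']; module
  refine le_of_forall_pos_le_add fun ε hε => ?_
  obtain ⟨z₁, hz₁⟩ := exists_lt_of_ciInf_lt
    (show moreauYosida φ p x < moreauYosida φ p x + ε by linarith)
  obtain ⟨z₂, hz₂⟩ := exists_lt_of_ciInf_lt
    (show moreauYosida φ p y < moreauYosida φ p y + ε by linarith)
  have hkey : moreauYosida φ p (x + t • (y - x))
      ≤ a * (φ z₁ + p / 2 * ‖x - z₁‖ ^ 2) + b * (φ z₂ + p / 2 * ‖y - z₂‖ ^ 2) := by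
    have h1 := moreauYosida_le hp hφ0 (x + t • (y - x)) (a • z₁ + b • z₂)
    have h2 : φ (a • z₁ + b • z₂) ≤ a * φ z₁ + b * φ z₂ :=
      hφconv.2 (Set.mem_univ z₁) (Set.mem_univ z₂) ha hb hab
    have h3 : (x + t • (y - x)) - (a • z₁ + b • z₂) = a • (x - z₁) + b • (y - z₂) := by
      rw [hmid]
      have : a • x + b • y - (a • z₁ + b • z₂) = a • (x - z₁) + b • (y - z₂) := by module
      exact this
    have h4 : ‖(x + t • (y - x)) - (a • z₁ + b • z₂)‖ ^ 2
        ≤ a * ‖x - z₁‖ ^ 2 + b * ‖y - z₂‖ ^ 2 := by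
      rw [h3]; exact norm_combo_le _ _ ha hb hab
    have h5 := mul_le_mul_of_nonneg_left h4 (show (0:ℝ) ≤ p / 2 by linarith)
    calc moreauYosida φ p (x + t • (y - x))
        ≤ φ (a • z₁ + b • z₂) + p / 2 * ‖x + t • (y - x) - (a • z₁ + b • z₂)‖ ^ 2 := h1
      _ ≤ (a * φ z₁ + b * φ z₂) + p / 2 * (a * ‖x - z₁‖ ^ 2 + b * ‖y - z₂‖ ^ 2) :=
          add_le_add h2 h5
      _ = a * (φ z₁ + p / 2 * ‖x - z₁‖ ^ 2) + b * (φ z₂ + p / 2 * ‖y - z₂‖ ^ 2) := by ring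
  have := mul_le_mul_of_nonneg_left (le_of_lt hz₁) ha
  have := mul_le_mul_of_nonneg_left (le_of_lt hz₂) hb
  nlinarith [hkey]


variable (ψ p) in
lemma moreauYosidaE_bdd (hp : 0 ≤ p) (hψ0 : ∀ z, 0 ≤ ψ z) (x : EuclideanSpace ℝ (Fin m)) :
    BddBelow (Set.range fun z : {z : EuclideanSpace ℝ (Fin m) // ψ z ≠ ⊤} =>
      (ψ z.1).toReal + p / 2 * ‖x - z.1‖ ^ 2) := by
  refine ⟨0, ?_⟩
  rintro r ⟨z, rfl⟩
  have h0 : (0 : ℝ) ≤ (ψ z.1).toReal := by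
    have := EReal.toReal_le_toReal (hψ0 z.1) (EReal.coe_ne_bot 0) z.2
    simpa using this
  nlinarith [sq_nonneg ‖x - z.1‖, hp, h0]

lemma moreauYosidaE_le (hp : 0 ≤ p) (hψ0 : ∀ z, 0 ≤ ψ z) (hproper : ∃ z, ψ z ≠ ⊤)
    (x : EuclideanSpace ℝ (Fin m)) {z : EuclideanSpace ℝ (Fin m)} (hz : ψ z ≠ ⊤) :
    moreauYosidaE ψ p x ≤ (ψ z).toReal + p / 2 * ‖x - z‖ ^ 2 := by
  rw [moreauYosidaE_eq hp hψ0 hproper]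
  exact ciInf_le (moreauYosidaE_bdd ψ p hp hψ0 x) ⟨z, hz⟩

lemma moreauYosidaE_nonneg (hp : 0 ≤ p) (hψ0 : ∀ z, 0 ≤ ψ z) (hproper : ∃ z, ψ z ≠ ⊤)
    (x : EuclideanSpace ℝ (Fin m)) : 0 ≤ moreauYosidaE ψ p x := by
  rw [moreauYosidaE_eq hp hψ0 hproper]
  haveI : Nonempty {z : EuclideanSpace ℝ (Fin m) // ψ z ≠ ⊤} :=
    ⟨⟨hproper.choose, hproper.choose_spec⟩⟩
  refine le_ciInf fun z => ?_
  have h0 : (0 : ℝ) ≤ (ψ z.1).toReal := by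
    have := EReal.toReal_le_toReal (hψ0 z.1) (EReal.coe_ne_bot 0) z.2
    simpa using this
  nlinarith [sq_nonneg ‖x - z.1‖, hp, h0]

lemma ereal_toReal_combo (hψ0 : ∀ z, 0 ≤ ψ z)
    (hψconv : ∀ z w : EuclideanSpace ℝ (Fin m), ∀ a b : ℝ, 0 ≤ a → 0 ≤ b → a + b = 1 →
      ψ (a • z + b • w) ≤ (a : EReal) * ψ z + (b : EReal) * ψ w)
    {z₁ z₂ : EuclideanSpace ℝ (Fin m)} (h₁ : ψ z₁ ≠ ⊤) (h₂ : ψ z₂ ≠ ⊤)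
    {a b : ℝ} (ha : 0 ≤ a) (hb : 0 ≤ b) (hab : a + b = 1) :
    ψ (a • z₁ + b • z₂) ≠ ⊤ ∧
      (ψ (a • z₁ + b • z₂)).toReal ≤ a * (ψ z₁).toReal + b * (ψ z₂).toReal := by
  have hbot₁ : ψ z₁ ≠ ⊥ := ne_of_gt (lt_of_lt_of_le EReal.bot_lt_zero (hψ0 z₁))
  have hbot₂ : ψ z₂ ≠ ⊥ := ne_of_gt (lt_of_lt_of_le EReal.bot_lt_zero (hψ0 z₂))
  have h := hψconv z₁ z₂ a b ha hb hab
  rw [← EReal.coe_toReal h₁ hbot₁, ← EReal.coe_toReal h₂ hbot₂] at h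
  have hrhs : ((a : ℝ) : EReal) * (((ψ z₁).toReal : ℝ) : EReal)
        + ((b : ℝ) : EReal) * (((ψ z₂).toReal : ℝ) : EReal)
      = ((a * (ψ z₁).toReal + b * (ψ z₂).toReal : ℝ) : EReal) := by
    rw [← EReal.coe_mul, ← EReal.coe_mul, ← EReal.coe_add]
  rw [hrhs] at h
  have hne : ψ (a • z₁ + b • z₂) ≠ ⊤ := (h.trans_lt (EReal.coe_lt_top _)).ne
  refine ⟨hne, ?_⟩
  have := EReal.toReal_le_toReal h
    (ne_of_gt (lt_of_lt_of_le EReal.bot_lt_zero (hψ0 _))) (EReal.coe_ne_top _)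
  rwa [EReal.toReal_coe] at this

lemma moreauYosidaE_segment (hp : 0 ≤ p) (hψ0 : ∀ z, 0 ≤ ψ z) (hproper : ∃ z, ψ z ≠ ⊤)
    (hψconv : ∀ z w : EuclideanSpace ℝ (Fin m), ∀ a b : ℝ, 0 ≤ a → 0 ≤ b → a + b = 1 →
      ψ (a • z + b • w) ≤ (a : EReal) * ψ z + (b : EReal) * ψ w)
    (x y : EuclideanSpace ℝ (Fin m)) {t : ℝ} (ht : t ∈ Set.Icc (0:ℝ) 1) :
    moreauYosidaE ψ p (x + t • (y - x))
      ≤ moreauYosidaE ψ p x + t * (moreauYosidaE ψ p y - moreauYosidaE ψ p x) := by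
  haveI : Nonempty {z : EuclideanSpace ℝ (Fin m) // ψ z ≠ ⊤} :=
    ⟨⟨hproper.choose, hproper.choose_spec⟩⟩
  have ha : (0:ℝ) ≤ 1 - t := by linarith [ht.2]
  have hb : (0:ℝ) ≤ t := ht.1
  have hab : (1 - t) + t = 1 := by ring
  have hmid : x + t • (y - x) = (1 - t) • x + t • y := by module
  refine le_of_forall_pos_le_add fun ε hε => ?_
  have hrx := moreauYosidaE_eq (ψ := ψ) (p := p) hp hψ0 hproper x
  have hry := moreauYosidaE_eq (ψ := ψ) (p := p) hp hψ0 hproper y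
  obtain ⟨z₁, hz₁⟩ := exists_lt_of_ciInf_lt
    (show (⨅ z : {z : EuclideanSpace ℝ (Fin m) // ψ z ≠ ⊤},
        ((ψ z.1).toReal + p / 2 * ‖x - z.1‖ ^ 2))
      < moreauYosidaE ψ p x + ε by rw [← hrx]; linarith)
  obtain ⟨z₂, hz₂⟩ := exists_lt_of_ciInf_lt
    (show (⨅ z : {z : EuclideanSpace ℝ (Fin m) // ψ z ≠ ⊤},
        ((ψ z.1).toReal + p / 2 * ‖y - z.1‖ ^ 2))
      < moreauYosidaE ψ p y + ε by rw [← hry]; linarith)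
  obtain ⟨hne, htr⟩ := ereal_toReal_combo hψ0 hψconv z₁.2 z₂.2 ha hb hab
  have h1 := moreauYosidaE_le hp hψ0 hproper (x + t • (y - x)) hne
  have h3 : (x + t • (y - x)) - ((1 - t) • z₁.1 + t • z₂.1)
      = (1 - t) • (x - z₁.1) + t • (y - z₂.1) := by
    rw [hmid]; module
  have h4 : ‖(x + t • (y - x)) - ((1 - t) • z₁.1 + t • z₂.1)‖ ^ 2
      ≤ (1 - t) * ‖x - z₁.1‖ ^ 2 + t * ‖y - z₂.1‖ ^ 2 := by
    rw [h3]; exact norm_combo_le _ _ ha hb hab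
  have h5 := mul_le_mul_of_nonneg_left h4 (show (0:ℝ) ≤ p / 2 by linarith)
  have hkey : moreauYosidaE ψ p (x + t • (y - x))
      ≤ (1 - t) * ((ψ z₁.1).toReal + p / 2 * ‖x - z₁.1‖ ^ 2)
        + t * ((ψ z₂.1).toReal + p / 2 * ‖y - z₂.1‖ ^ 2) := by
    calc moreauYosidaE ψ p (x + t • (y - x))
        ≤ (ψ ((1 - t) • z₁.1 + t • z₂.1)).toReal
            + p / 2 * ‖(x + t • (y - x)) - ((1 - t) • z₁.1 + t • z₂.1)‖ ^ 2 := h1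
      _ ≤ ((1 - t) * (ψ z₁.1).toReal + t * (ψ z₂.1).toReal)
            + p / 2 * ((1 - t) * ‖x - z₁.1‖ ^ 2 + t * ‖y - z₂.1‖ ^ 2) := add_le_add htr h5
      _ = (1 - t) * ((ψ z₁.1).toReal + p / 2 * ‖x - z₁.1‖ ^ 2)
            + t * ((ψ z₂.1).toReal + p / 2 * ‖y - z₂.1‖ ^ 2) := by ring
  have hm1 := mul_le_mul_of_nonneg_left (le_of_lt hz₁) ha
  have hm2 := mul_le_mul_of_nonneg_left (le_of_lt hz₂) hb
  nlinarith [hkey, hm1, hm2]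

lemma moreauYosidaE_semiconcave (hp : 0 ≤ p) (hψ0 : ∀ z, 0 ≤ ψ z) (hproper : ∃ z, ψ z ≠ ⊤)
    (x y : EuclideanSpace ℝ (Fin m)) {t : ℝ} (ht : t ∈ Set.Icc (0:ℝ) 1) :
    moreauYosidaE ψ p x + t * (moreauYosidaE ψ p y - moreauYosidaE ψ p x)
        - (p / 2 * ‖y - x‖ ^ 2) * (t * (1 - t))
      ≤ moreauYosidaE ψ p (x + t • (y - x)) := by
  haveI : Nonempty {z : EuclideanSpace ℝ (Fin m) // ψ z ≠ ⊤} :=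
    ⟨⟨hproper.choose, hproper.choose_spec⟩⟩
  have ha : (0:ℝ) ≤ 1 - t := by linarith [ht.2]
  have hb : (0:ℝ) ≤ t := ht.1
  have hab : (1 - t) + t = 1 := by ring
  rw [moreauYosidaE_eq hp hψ0 hproper (x + t • (y - x))]
  refine le_ciInf fun z => ?_
  have h3 : (x + t • (y - x)) - z.1 = (1 - t) • (x - z.1) + t • (y - z.1) := by module
  have h4 : ‖(x + t • (y - x)) - z.1‖ ^ 2
      = (1 - t) * ‖x - z.1‖ ^ 2 + t * ‖y - z.1‖ ^ 2 - (1 - t) * t * ‖x - y‖ ^ 2 := by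
    rw [h3]
    have := norm_combo_eq (x - z.1) (y - z.1) hab
    rw [this]
    congr 2
    · rw [show (x - z.1) - (y - z.1) = x - y by abel]
  have hFx := moreauYosidaE_le hp hψ0 hproper x z.2
  have hFy := moreauYosidaE_le hp hψ0 hproper y z.2
  have hm1 := mul_le_mul_of_nonneg_left hFx ha
  have hm2 := mul_le_mul_of_nonneg_left hFy hb
  have hnorm : ‖x - y‖ = ‖y - x‖ := norm_sub_rev _ _
  have expand : (ψ z.1).toReal + p / 2 * ‖(x + t • (y - x)) - z.1‖ ^ 2
      = (1 - t) * ((ψ z.1).toReal + p / 2 * ‖x - z.1‖ ^ 2)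
        + t * ((ψ z.1).toReal + p / 2 * ‖y - z.1‖ ^ 2)
        - (p / 2 * ‖y - x‖ ^ 2) * (t * (1 - t)) := by
    rw [h4, ← hnorm]; ring
  rw [expand]
  have : moreauYosidaE ψ p x + t * (moreauYosidaE ψ p y - moreauYosidaE ψ p x)
      = (1 - t) * moreauYosidaE ψ p x + t * moreauYosidaE ψ p y := by ring
  rw [this]
  have := sub_le_sub_right (add_le_add hm1 hm2) ((p / 2 * ‖y - x‖ ^ 2) * (t * (1 - t)))
  exact this
end MY


section Grad
variable {E : Type*} [NormedAddCommGroup E] [InnerProductSpace ℝ E] [CompleteSpace E]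

lemma seg_hasDerivAt' (x y : E) (t : ℝ) :
    HasDerivAt (fun t : ℝ => x + t • (y - x)) (y - x) t := by
  simpa using ((hasDerivAt_id t).smul_const (y - x)).const_add x

lemma grad_comp_seg {F : E → ℝ} {v : E} {x y : E} (hg : HasGradientAt F v x) :
    HasDerivAt (fun t : ℝ => F (x + t • (y - x))) ⟪v, y - x⟫ 0 := by
  have h2 : HasFDerivAt F (InnerProductSpace.toDual ℝ E v : E →L[ℝ] ℝ)
      (x + (0:ℝ) • (y - x)) := by simpa using hg.hasFDerivAt
  have h3 := h2.comp_hasDerivAt (0:ℝ) (seg_hasDerivAt' x y 0)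
  simp only [InnerProductSpace.toDual_apply_apply] at h3; exact h3

lemma grad_slope_le {F : E → ℝ} {v : E} {x y : E}
    (hg : HasGradientAt F v x)
    (h : ∀ t ∈ Set.Icc (0:ℝ) 1, F (x + t • (y - x)) ≤ F x + t * (F y - F x)) :
    ⟪v, y - x⟫ ≤ F y - F x := by
  have hslope := hasDerivAt_iff_tendsto_slope.mp (grad_comp_seg hg (y := y))
  have hmono : 𝓝[>] (0:ℝ) ≤ 𝓝[≠] (0:ℝ) := nhdsWithin_mono _ (fun t ht => ne_of_gt ht)
  refine le_of_tendsto (hslope.mono_left hmono) ?_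
  filter_upwards [Ioc_mem_nhdsGT_of_mem (Set.left_mem_Ico.2 one_pos)] with t ht
  have h1 := h t ⟨le_of_lt ht.1, ht.2⟩
  rw [slope_def_field]
  simp only [sub_zero]
  rw [div_le_iff₀ ht.1]
  simp only [zero_smul, add_zero]
  linarith

lemma grad_slope_ge {F : E → ℝ} {v : E} {x y : E} {C : ℝ}
    (hg : HasGradientAt F v x)
    (h : ∀ t ∈ Set.Icc (0:ℝ) 1,
      F x + t * (F y - F x) - C * (t * (1 - t)) ≤ F (x + t • (y - x))) :
    F y - F x - C ≤ ⟪v, y - x⟫ := by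
  have hslope := hasDerivAt_iff_tendsto_slope.mp (grad_comp_seg hg (y := y))
  have hmono : 𝓝[>] (0:ℝ) ≤ 𝓝[≠] (0:ℝ) := nhdsWithin_mono _ (fun t ht => ne_of_gt ht)
  have hlim2 : Filter.Tendsto (fun t : ℝ => F y - F x - C * (1 - t)) (𝓝[>] (0:ℝ))
      (𝓝 (F y - F x - C)) := by
    have h5 : Filter.Tendsto (fun t : ℝ => F y - F x - C * (1 - t)) (𝓝 (0:ℝ))
        (𝓝 (F y - F x - C * (1 - 0))) :=
      tendsto_const_nhds.sub ((tendsto_const_nhds.sub tendsto_id).const_mul C)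
    simpa using h5.mono_left nhdsWithin_le_nhds
  refine le_of_tendsto_of_tendsto hlim2 (hslope.mono_left hmono) ?_
  filter_upwards [Ioc_mem_nhdsGT_of_mem (Set.left_mem_Ico.2 one_pos)] with t ht
  have h1 := h t ⟨le_of_lt ht.1, ht.2⟩
  rw [slope_def_field]
  simp only [sub_zero]
  rw [le_div_iff₀ ht.1]
  simp only [zero_smul, add_zero] at h1 ⊢
  nlinarith [ht.1]

lemma grad_key {F : E → ℝ} {g : E → E} {p : ℝ} (hp : 0 < p)
    (hlow : ∀ x y : E, F x + ⟪g x, y - x⟫ ≤ F y)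
    (hup : ∀ x y : E, F y ≤ F x + ⟪g x, y - x⟫ + p / 2 * ‖y - x‖ ^ 2)
    (x y : E) :
    F x + ⟪g x, y - x⟫ + 1 / (2 * p) * ‖g y - g x‖ ^ 2 ≤ F y := by
  set d := g y - g x with hd
  set w := y - p⁻¹ • d with hw
  have h1 := hlow x w
  have h2 := hup y w
  have hwy : w - y = -(p⁻¹ • d) := by rw [hw]; abel
  have hwx : w - x = (y - x) - p⁻¹ • d := by rw [hw]; abel
  have e1 : ⟪g x, w - x⟫ = ⟪g x, y - x⟫ - p⁻¹ * ⟪g x, d⟫ := by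
    rw [hwx, inner_sub_right, real_inner_smul_right]
  have e2 : ⟪g y, w - y⟫ = -(p⁻¹ * ⟪g y, d⟫) := by
    rw [hwy, inner_neg_right, real_inner_smul_right]
  have e3 : ‖w - y‖ ^ 2 = p⁻¹ ^ 2 * ‖d‖ ^ 2 := by
    rw [hwy, norm_neg, norm_smul, mul_pow]
    congr 1
    rw [Real.norm_eq_abs, sq_abs]
  have e4 : (⟪g y, d⟫ : ℝ) - ⟪g x, d⟫ = ‖d‖ ^ 2 := by
    rw [← inner_sub_left, ← hd, real_inner_self_eq_norm_sq]
  rw [e1] at h1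
  rw [e2, e3] at h2
  have hp' : p ≠ 0 := ne_of_gt hp
  have key : p / 2 * (p⁻¹ ^ 2 * ‖d‖ ^ 2) = 1 / (2 * p) * ‖d‖ ^ 2 := by
    field_simp
  have e5 : p⁻¹ * ⟪g y, d⟫ - p⁻¹ * ⟪g x, d⟫ = p⁻¹ * ‖d‖ ^ 2 := by
    rw [← mul_sub, e4]
  have key2 : p⁻¹ * ‖d‖ ^ 2 = 2 * (1 / (2 * p) * ‖d‖ ^ 2) := by
    field_simp
  linarith

lemma grad_lipschitz {F : E → ℝ} {g : E → E} {p : ℝ} (hp : 0 < p)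
    (hlow : ∀ x y : E, F x + ⟪g x, y - x⟫ ≤ F y)
    (hup : ∀ x y : E, F y ≤ F x + ⟪g x, y - x⟫ + p / 2 * ‖y - x‖ ^ 2)
    (x y : E) : ‖g x - g y‖ ≤ p * ‖x - y‖ := by
  have k1 := grad_key hp hlow hup x y
  have k2 := grad_key hp hlow hup y x
  have hrev : ‖g x - g y‖ = ‖g y - g x‖ := norm_sub_rev _ _
  set u := g y - g x with hu
  have e0 : (⟪u, y - x⟫ : ℝ) = ⟪g y, y - x⟫ - ⟪g x, y - x⟫ := by
    rw [hu, inner_sub_left]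
  have e1 : (⟪g y, x - y⟫ : ℝ) = -⟪g y, y - x⟫ := by
    rw [show (x - y : E) = -(y - x) by abel, inner_neg_right]
  have hcs : (⟪u, y - x⟫ : ℝ) ≤ ‖u‖ * ‖y - x‖ := real_inner_le_norm u (y - x)
  have hxy : ‖x - y‖ = ‖y - x‖ := norm_sub_rev _ _
  rw [hrev, hxy]
  rw [hrev] at k2
  have key2 : 1 / p * ‖u‖ ^ 2 = 2 * (1 / (2 * p) * ‖u‖ ^ 2) := by
    field_simp
  have hsum : 1 / p * ‖u‖ ^ 2 ≤ ⟪u, y - x⟫ := by linarith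
  rcases eq_or_lt_of_le (norm_nonneg u) with h0 | h0
  · rw [← h0]
    positivity
  · have h3 : ‖u‖ ^ 2 ≤ p * (‖u‖ * ‖y - x‖) := by
      have h6 := mul_le_mul_of_nonneg_left (le_trans hsum hcs) (le_of_lt hp)
      calc ‖u‖ ^ 2 = p * (1 / p * ‖u‖ ^ 2) := by field_simp
        _ ≤ p * (‖u‖ * ‖y - x‖) := h6
    nlinarith
end Grad

section Helpers

lemma my_antitoneOn_aux {a b : ℝ} {f f' : ℝ → ℝ}
    (hf : ∀ t ∈ Set.Icc a b, HasDerivWithinAt f (f' t) (Set.Icc a b) t)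
    (h0 : ∀ t ∈ Set.Icc a b, f' t ≤ 0) : AntitoneOn f (Set.Icc a b) := by
  apply antitoneOn_of_deriv_nonpos (convex_Icc a b)
    (fun t ht => (hf t ht).continuousWithinAt)
  · intro t ht
    rw [interior_Icc] at ht
    exact ((hf t (Ioo_subset_Icc_self ht)).hasDerivAt
      (Icc_mem_nhds ht.1 ht.2)).differentiableAt.differentiableWithinAt
  · intro t ht
    rw [interior_Icc] at ht
    rw [((hf t (Ioo_subset_Icc_self ht)).hasDerivAt (Icc_mem_nhds ht.1 ht.2)).deriv]
    exact h0 t (Ioo_subset_Icc_self ht)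

lemma primitive_hasDerivWithinAt {T : ℝ} {h : ℝ → ℝ}
    (hc : ContinuousOn h (Set.Icc 0 T)) {t : ℝ} (ht : t ∈ Set.Icc (0:ℝ) T) :
    HasDerivWithinAt (fun τ => ∫ s in (0:ℝ)..τ, h s) (h t) (Set.Icc 0 T) t := by
  haveI : Fact (t ∈ Set.Icc (0:ℝ) T) := ⟨ht⟩
  apply intervalIntegral.integral_hasDerivWithinAt_right
  · apply ContinuousOn.intervalIntegrable
    apply hc.mono
    rw [Set.uIcc_of_le ht.1]
    exact Set.Icc_subset_Icc (le_refl 0) ht.2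
  · exact hc.stronglyMeasurableAtFilter_nhdsWithin measurableSet_Icc t
  · exact hc t ht
end Helpers


lemma gronwall_alg {a b B1 B2 Mf lx lz : ℝ} (ha : 0 ≤ a) (hb : 0 ≤ b) (hB1 : 0 ≤ B1)
    (hB2 : 0 ≤ B2) (hMf : 0 ≤ Mf) (hlx : 0 ≤ lx) (hlz : 0 ≤ lz) :
    2 * (a * (B1 + lx * (a + b) + Mf)) + 2 * (b * (B2 + lz * (a + b)))
      ≤ (B1 + B2 + Mf + 3 * lx + 3 * lz) * (1 + (a ^ 2 + b ^ 2)) := by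
  have i1 : 2*a*B1 ≤ B1*(1+a^2+b^2) := by
    nlinarith [mul_nonneg hB1 (sq_nonneg (a-1)), mul_nonneg hB1 (sq_nonneg b)]
  have i2 : 2*a*Mf ≤ Mf*(1+a^2+b^2) := by
    nlinarith [mul_nonneg hMf (sq_nonneg (a-1)), mul_nonneg hMf (sq_nonneg b)]
  have i3 : 2*b*B2 ≤ B2*(1+a^2+b^2) := by
    nlinarith [mul_nonneg hB2 (sq_nonneg (b-1)), mul_nonneg hB2 (sq_nonneg a)]
  have i4 : 2*lx*a*(a+b) ≤ 3*lx*(1+a^2+b^2) := by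
    nlinarith [mul_nonneg hlx (sq_nonneg (a-b)), mul_nonneg hlx (sq_nonneg b), hlx]
  have i5 : 2*lz*b*(a+b) ≤ 3*lz*(1+a^2+b^2) := by
    nlinarith [mul_nonneg hlz (sq_nonneg (a-b)), mul_nonneg hlz (sq_nonneg a), hlz]
  nlinarith [i1, i2, i3, i4, i5]

lemma bzsq_alg {c a b B2 lz R : ℝ} (hc : 0 ≤ c) (ha : 0 ≤ a) (hb : 0 ≤ b)
    (h1 : c ≤ B2 + lz * (a + b)) (hB2 : 0 ≤ B2) (hlz : 0 ≤ lz)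
    (h2 : 1 + (a ^ 2 + b ^ 2) ≤ R) :
    c ^ 2 ≤ 2 * B2 ^ 2 + 4 * lz ^ 2 * R := by
  have hrhs : 0 ≤ B2 + lz * (a + b) := by positivity
  have hsq : c ^ 2 ≤ (B2 + lz * (a + b)) ^ 2 := by nlinarith
  have h3 : (B2 + lz * (a + b)) ^ 2 ≤ 2 * B2 ^ 2 + 2 * lz ^ 2 * (a + b) ^ 2 := by
    nlinarith [sq_nonneg (B2 - lz * (a + b))]
  have h4 : (a + b) ^ 2 ≤ 2 * (a ^ 2 + b ^ 2) := by nlinarith [sq_nonneg (a - b)]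
  have h5 : a ^ 2 + b ^ 2 ≤ R := by nlinarith
  nlinarith [sq_nonneg lz, mul_nonneg (sq_nonneg lz) (sq_nonneg (a+b))]


/-- Energy estimate along the penalized flow: for every `p ≥ 1` and `t ∈ [0,T]`,
`ψ_p(z^p(t)) + (1/2)∫₀ᵗ ‖∇ψ_p(z^p(s))‖² ds ≤ ψ_p(z₀) + (1/2)∫₀ᵗ ‖bᶻ(x^p(s),z^p(s))‖² ds`;
and if moreover `ψ(z₀) < ∞`, then `sup_{p≥1} ∫₀ᵀ ‖∇ψ_p(z^p(s))‖² ds < ∞`. -/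
theorem penalized_coupled_energy_estimate {n m : ℕ} (T : ℝ) (hT : 0 < T)
    (f : ℝ → EuclideanSpace ℝ (Fin n)) (hf : ContinuousOn f (Icc 0 T))
    (bx : EuclideanSpace ℝ (Fin n) × EuclideanSpace ℝ (Fin m) → EuclideanSpace ℝ (Fin n))
    (bz : EuclideanSpace ℝ (Fin n) × EuclideanSpace ℝ (Fin m) → EuclideanSpace ℝ (Fin m))
    (hbx : ∃ Lx : NNReal, LipschitzWith Lx bx) (hbz : ∃ Lz : NNReal, LipschitzWith Lz bz)
    (φ : EuclideanSpace ℝ (Fin n) → ℝ) (hφconv : ConvexOn ℝ univ φ)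
    (L : NNReal) (hφLip : LipschitzWith L φ) (hφ0 : ∀ x, 0 ≤ φ x) (hφzero : φ 0 = 0)
    (ψ : EuclideanSpace ℝ (Fin m) → EReal)
    (hψ0 : ∀ z, 0 ≤ ψ z) (hψzero : ψ 0 = 0) (hψproper : ∃ z, ψ z ≠ ⊤)
    (hψlsc : LowerSemicontinuous ψ)
    (hψconv : ∀ z w : EuclideanSpace ℝ (Fin m), ∀ a b : ℝ, 0 ≤ a → 0 ≤ b → a + b = 1 →
      ψ (a • z + b • w) ≤ (a : EReal) * ψ z + (b : EReal) * ψ w)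
    (gφ : ℝ → EuclideanSpace ℝ (Fin n) → EuclideanSpace ℝ (Fin n))
    (gψ : ℝ → EuclideanSpace ℝ (Fin m) → EuclideanSpace ℝ (Fin m))
    (hgφ : ∀ p : ℝ, 1 ≤ p → ∀ x, HasGradientAt (moreauYosida φ p) (gφ p x) x)
    (hgψ : ∀ p : ℝ, 1 ≤ p → ∀ x, HasGradientAt (moreauYosidaE ψ p) (gψ p x) x)
    (x₀ : EuclideanSpace ℝ (Fin n)) (z₀ : EuclideanSpace ℝ (Fin m))
    (X : ℝ → ℝ → EuclideanSpace ℝ (Fin n)) (Z : ℝ → ℝ → EuclideanSpace ℝ (Fin m))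
    (hX0 : ∀ p : ℝ, 1 ≤ p → X p 0 = x₀) (hZ0 : ∀ p : ℝ, 1 ≤ p → Z p 0 = z₀)
    (hXode : ∀ p : ℝ, 1 ≤ p → ∀ t ∈ Icc (0 : ℝ) T,
      HasDerivWithinAt (X p) (bx (X p t, Z p t) + f t - gφ p (X p t)) (Icc 0 T) t)
    (hZode : ∀ p : ℝ, 1 ≤ p → ∀ t ∈ Icc (0 : ℝ) T,
      HasDerivWithinAt (Z p) (bz (X p t, Z p t) - gψ p (Z p t)) (Icc 0 T) t) :
    (∀ p : ℝ, 1 ≤ p → ∀ t ∈ Icc (0 : ℝ) T,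
      moreauYosidaE ψ p (Z p t) + 1 / 2 * ∫ s in (0 : ℝ)..t, ‖gψ p (Z p s)‖ ^ 2 ≤
        moreauYosidaE ψ p z₀ + 1 / 2 * ∫ s in (0 : ℝ)..t, ‖bz (X p s, Z p s)‖ ^ 2) ∧
    (ψ z₀ ≠ ⊤ → ∃ M : ℝ, ∀ p : ℝ, 1 ≤ p →
      ∫ s in (0 : ℝ)..T, ‖gψ p (Z p s)‖ ^ 2 ≤ M) := by
  obtain ⟨Lx, hLx⟩ := hbx
  obtain ⟨Lz, hLz⟩ := hbz
  have h0T : (0:ℝ) ∈ Icc (0:ℝ) T := ⟨le_refl 0, le_of_lt hT⟩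
  have hTT : T ∈ Icc (0:ℝ) T := ⟨le_of_lt hT, le_refl T⟩
  have key : ∀ p : ℝ, 1 ≤ p → ∀ t ∈ Icc (0 : ℝ) T,
      moreauYosidaE ψ p (Z p t) + 1 / 2 * ∫ s in (0 : ℝ)..t, ‖gψ p (Z p s)‖ ^ 2 ≤
        moreauYosidaE ψ p z₀ + 1 / 2 * ∫ s in (0 : ℝ)..t, ‖bz (X p s, Z p s)‖ ^ 2 := by
    intro p hp t ht
    have hp0 : (0:ℝ) ≤ p := by linarith
    have hppos : (0:ℝ) < p := by linarith
    have hg := hgψ p hp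
    have hlow : ∀ x y, moreauYosidaE ψ p x + ⟪gψ p x, y - x⟫ ≤ moreauYosidaE ψ p y := by
      intro x y
      have h := grad_slope_le (hg x)
        (fun s hs => moreauYosidaE_segment hp0 hψ0 hψproper hψconv x y hs)
      linarith
    have hup : ∀ x y, moreauYosidaE ψ p y
        ≤ moreauYosidaE ψ p x + ⟪gψ p x, y - x⟫ + p / 2 * ‖y - x‖ ^ 2 := by
      intro x y
      have h := grad_slope_ge (hg x)
        (fun s hs => moreauYosidaE_semiconcave hp0 hψ0 hψproper x y hs)
      linarith
    have hglip := grad_lipschitz hppos hlow hup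
    have hgcont : Continuous (gψ p) := by
      refine LipschitzWith.continuous (K := p.toNNReal)
        (LipschitzWith.of_dist_le_mul fun a b => ?_)
      rw [dist_eq_norm, dist_eq_norm, Real.coe_toNNReal p hp0]
      exact hglip a b
    have hZcont : ContinuousOn (Z p) (Icc 0 T) :=
      fun s hs => (hZode p hp s hs).continuousWithinAt
    have hXcont : ContinuousOn (X p) (Icc 0 T) :=
      fun s hs => (hXode p hp s hs).continuousWithinAt
    have hbzc : ContinuousOn (fun s => bz (X p s, Z p s)) (Icc 0 T) :=
      hLz.continuous.comp_continuousOn (hXcont.prodMk hZcont)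
    have hI1 : ContinuousOn (fun s => ‖gψ p (Z p s)‖ ^ 2) (Icc 0 T) :=
      ((hgcont.comp_continuousOn hZcont).norm).pow 2
    have hI2 : ContinuousOn (fun s => ‖bz (X p s, Z p s)‖ ^ 2) (Icc 0 T) := (hbzc.norm).pow 2
    have hEderiv : ∀ τ ∈ Icc (0:ℝ) T, HasDerivWithinAt
        (fun τ => moreauYosidaE ψ p (Z p τ)
          + 1 / 2 * (∫ s in (0:ℝ)..τ, ‖gψ p (Z p s)‖ ^ 2)
          - 1 / 2 * ∫ s in (0:ℝ)..τ, ‖bz (X p s, Z p s)‖ ^ 2)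
        (⟪gψ p (Z p τ), bz (X p τ, Z p τ) - gψ p (Z p τ)⟫
          + 1 / 2 * ‖gψ p (Z p τ)‖ ^ 2 - 1 / 2 * ‖bz (X p τ, Z p τ)‖ ^ 2) (Icc 0 T) τ := by
      intro τ hτ
      have hchain : HasDerivWithinAt (fun τ => moreauYosidaE ψ p (Z p τ))
          ⟪gψ p (Z p τ), bz (X p τ, Z p τ) - gψ p (Z p τ)⟫ (Icc 0 T) τ := by
        have h2 := (hg (Z p τ)).hasFDerivAt.comp_hasDerivWithinAt τ (hZode p hp τ hτ)
        simp only [InnerProductSpace.toDual_apply_apply] at h2; exact h2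
      exact (hchain.add ((primitive_hasDerivWithinAt hI1 hτ).const_mul (1/2))).sub
        ((primitive_hasDerivWithinAt hI2 hτ).const_mul (1/2))
    have hnonpos : ∀ τ ∈ Icc (0:ℝ) T,
        (⟪gψ p (Z p τ), bz (X p τ, Z p τ) - gψ p (Z p τ)⟫
          + 1 / 2 * ‖gψ p (Z p τ)‖ ^ 2 - 1 / 2 * ‖bz (X p τ, Z p τ)‖ ^ 2 : ℝ) ≤ 0 := by
      intro τ hτ
      have e1 : (⟪gψ p (Z p τ), bz (X p τ, Z p τ) - gψ p (Z p τ)⟫:ℝ)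
          = ⟪gψ p (Z p τ), bz (X p τ, Z p τ)⟫ - ‖gψ p (Z p τ)‖^2 := by
        rw [inner_sub_right, real_inner_self_eq_norm_sq]
      have e2 : ‖gψ p (Z p τ) - bz (X p τ, Z p τ)‖^2
          = ‖gψ p (Z p τ)‖^2 - 2*⟪gψ p (Z p τ), bz (X p τ, Z p τ)⟫
            + ‖bz (X p τ, Z p τ)‖^2 := norm_sub_sq_real _ _
      nlinarith [sq_nonneg ‖gψ p (Z p τ) - bz (X p τ, Z p τ)‖, e1, e2]
    have hanti := my_antitoneOn_aux hEderiv hnonpos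
    have hET := hanti h0T ht ht.1
    simp only [intervalIntegral.integral_same, hZ0 p hp, mul_zero] at hET
    linarith
  refine ⟨key, fun hz₀ => ?_⟩
  obtain ⟨Mf, hMf⟩ := isCompact_Icc.exists_bound_of_continuousOn hf
  have hMf0 : (0:ℝ) ≤ Mf := le_trans (norm_nonneg _) (hMf 0 h0T)
  set B₁ : ℝ := ‖bx (0, 0)‖ with hB₁
  set B₂ : ℝ := ‖bz (0, 0)‖ with hB₂
  have hB₁0 : (0:ℝ) ≤ B₁ := norm_nonneg _
  have hB₂0 : (0:ℝ) ≤ B₂ := norm_nonneg _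
  have hLx0 : (0:ℝ) ≤ (Lx:ℝ) := Lx.2
  have hLz0 : (0:ℝ) ≤ (Lz:ℝ) := Lz.2
  set K : ℝ := B₁ + B₂ + Mf + 3 * (Lx:ℝ) + 3 * (Lz:ℝ) with hK
  have hK0 : (0:ℝ) ≤ K := by rw [hK]; linarith
  set R : ℝ := (1 + ‖x₀‖^2 + ‖z₀‖^2) * Real.exp (K * T) with hR
  set C2 : ℝ := 2*B₂^2 + 4*(Lz:ℝ)^2*R with hC2
  refine ⟨2 * (ψ z₀).toReal + C2 * T, fun p hp => ?_⟩
  have hp0 : (0:ℝ) ≤ p := by linarith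
  have hppos : (0:ℝ) < p := by linarith
  -- nonnegativity of ⟨x, gφ x⟩ and ⟨z, gψ z⟩
  have hφlow : ∀ x y, moreauYosida φ p x + ⟪gφ p x, y - x⟫ ≤ moreauYosida φ p y := by
    intro x y
    have h := grad_slope_le (hgφ p hp x)
      (fun s hs => moreauYosida_segment hp0 hφconv hφ0 x y hs)
    linarith
  have hψlow : ∀ x y, moreauYosidaE ψ p x + ⟪gψ p x, y - x⟫ ≤ moreauYosidaE ψ p y := by
    intro x y
    have h := grad_slope_le (hgψ p hp x)
      (fun s hs => moreauYosidaE_segment hp0 hψ0 hψproper hψconv x y hs)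
    linarith
  have hφinner : ∀ x, (0:ℝ) ≤ ⟪x, gφ p x⟫ := by
    intro x
    have h := hφlow x 0
    have h0 : moreauYosida φ p 0 ≤ 0 := by
      have := moreauYosida_le (φ := φ) hp0 hφ0 0 0
      simpa [hφzero] using this
    have h1 : 0 ≤ moreauYosida φ p x := moreauYosida_nonneg hp0 hφ0 x
    have h2 : (⟪gφ p x, (0:EuclideanSpace ℝ (Fin n)) - x⟫ : ℝ) = -⟪gφ p x, x⟫ := by
      rw [zero_sub, inner_neg_right]
    rw [real_inner_comm]
    linarith [h, h0, h1, h2.symm.le, h2.le]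
  have hψinner : ∀ z, (0:ℝ) ≤ ⟪z, gψ p z⟫ := by
    intro z
    have h := hψlow z 0
    have h0 : moreauYosidaE ψ p 0 ≤ 0 := by
      have := moreauYosidaE_le hp0 hψ0 hψproper 0 (z := 0) (by rw [hψzero]; exact EReal.zero_ne_top)
      simpa [hψzero] using this
    have h1 : 0 ≤ moreauYosidaE ψ p z := moreauYosidaE_nonneg hp0 hψ0 hψproper z
    have h2 : (⟪gψ p z, (0:EuclideanSpace ℝ (Fin m)) - z⟫ : ℝ) = -⟪gψ p z, z⟫ := by
      rw [zero_sub, inner_neg_right]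
    rw [real_inner_comm]
    linarith [h, h0, h1, h2.le]
  -- continuity
  have hZcont : ContinuousOn (Z p) (Icc 0 T) :=
    fun s hs => (hZode p hp s hs).continuousWithinAt
  have hXcont : ContinuousOn (X p) (Icc 0 T) :=
    fun s hs => (hXode p hp s hs).continuousWithinAt
  have hbzc : ContinuousOn (fun s => bz (X p s, Z p s)) (Icc 0 T) :=
    hLz.continuous.comp_continuousOn (hXcont.prodMk hZcont)
  have hI2 : ContinuousOn (fun s => ‖bz (X p s, Z p s)‖ ^ 2) (Icc 0 T) := (hbzc.norm).pow 2
  -- Lipschitz bounds on bx, bz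
  have hbxb : ∀ s : ℝ, ‖bx (X p s, Z p s)‖ ≤ B₁ + (Lx:ℝ) * (‖X p s‖ + ‖Z p s‖) := by
    intro s
    have hd := hLx.dist_le_mul (X p s, Z p s) (0, 0)
    rw [Prod.dist_eq] at hd
    simp only [dist_zero_right] at hd
    have hmax : max ‖X p s‖ ‖Z p s‖ ≤ ‖X p s‖ + ‖Z p s‖ :=
      max_le (le_add_of_nonneg_right (norm_nonneg _)) (le_add_of_nonneg_left (norm_nonneg _))
    have hdd : dist (bx (X p s, Z p s)) (bx (0, 0)) = ‖bx (X p s, Z p s) - bx (0,0)‖ :=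
      dist_eq_norm _ _
    calc ‖bx (X p s, Z p s)‖ ≤ ‖bx (X p s, Z p s) - bx (0,0)‖ + ‖bx (0,0)‖ := by
          have := norm_add_le (bx (X p s, Z p s) - bx (0,0)) (bx (0,0))
          simpa using this
      _ ≤ (Lx:ℝ) * (‖X p s‖ + ‖Z p s‖) + B₁ := by
          rw [← hdd, hB₁]
          exact add_le_add (hd.trans (mul_le_mul_of_nonneg_left hmax hLx0)) (le_refl _)
      _ = B₁ + (Lx:ℝ) * (‖X p s‖ + ‖Z p s‖) := by ring
  have hbzb : ∀ s : ℝ, ‖bz (X p s, Z p s)‖ ≤ B₂ + (Lz:ℝ) * (‖X p s‖ + ‖Z p s‖) := by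
    intro s
    have hd := hLz.dist_le_mul (X p s, Z p s) (0, 0)
    rw [Prod.dist_eq] at hd
    simp only [dist_zero_right] at hd
    have hmax : max ‖X p s‖ ‖Z p s‖ ≤ ‖X p s‖ + ‖Z p s‖ :=
      max_le (le_add_of_nonneg_right (norm_nonneg _)) (le_add_of_nonneg_left (norm_nonneg _))
    have hdd : dist (bz (X p s, Z p s)) (bz (0, 0)) = ‖bz (X p s, Z p s) - bz (0,0)‖ :=
      dist_eq_norm _ _
    calc ‖bz (X p s, Z p s)‖ ≤ ‖bz (X p s, Z p s) - bz (0,0)‖ + ‖bz (0,0)‖ := by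
          have := norm_add_le (bz (X p s, Z p s) - bz (0,0)) (bz (0,0))
          simpa using this
      _ ≤ (Lz:ℝ) * (‖X p s‖ + ‖Z p s‖) + B₂ := by
          rw [← hdd, hB₂]
          exact add_le_add (hd.trans (mul_le_mul_of_nonneg_left hmax hLz0)) (le_refl _)
      _ = B₂ + (Lz:ℝ) * (‖X p s‖ + ‖Z p s‖) := by ring
  -- Gronwall
  set v : ℝ → ℝ := fun s => ⟪X p s, X p s⟫ + ⟪Z p s, Z p s⟫ with hv
  have hvnorm : ∀ s, v s = ‖X p s‖^2 + ‖Z p s‖^2 := by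
    intro s
    rw [hv]
    simp only [real_inner_self_eq_norm_sq]
  have hvnonneg : ∀ s, 0 ≤ v s := by
    intro s; rw [hvnorm]; positivity
  set Dv : ℝ → ℝ := fun s =>
    (⟪X p s, bx (X p s, Z p s) + f s - gφ p (X p s)⟫
      + ⟪bx (X p s, Z p s) + f s - gφ p (X p s), X p s⟫)
    + (⟪Z p s, bz (X p s, Z p s) - gψ p (Z p s)⟫
      + ⟪bz (X p s, Z p s) - gψ p (Z p s), Z p s⟫) with hDv
  have hvd : ∀ s ∈ Icc (0:ℝ) T, HasDerivWithinAt v (Dv s) (Icc 0 T) s := by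
    intro s hs
    exact ((hXode p hp s hs |> (HasDerivWithinAt.inner ℝ (hXode p hp s hs))).add
      ((hZode p hp s hs |> (HasDerivWithinAt.inner ℝ (hZode p hp s hs)))))
  have hDvle : ∀ s ∈ Icc (0:ℝ) T, Dv s ≤ K * (1 + v s) := by
    intro s hs
    have ha0 : (0:ℝ) ≤ ‖X p s‖ := norm_nonneg _
    have hb0 : (0:ℝ) ≤ ‖Z p s‖ := norm_nonneg _
    have h1 : (⟪X p s, bx (X p s, Z p s) + f s - gφ p (X p s)⟫ : ℝ)
        ≤ ‖X p s‖ * (B₁ + (Lx:ℝ) * (‖X p s‖ + ‖Z p s‖) + Mf) := by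
      have e1 : (⟪X p s, bx (X p s, Z p s) + f s - gφ p (X p s)⟫ : ℝ)
          = ⟪X p s, bx (X p s, Z p s)⟫ + ⟪X p s, f s⟫ - ⟪X p s, gφ p (X p s)⟫ := by
        rw [inner_sub_right, inner_add_right]
      have c1 : (⟪X p s, bx (X p s, Z p s)⟫ : ℝ)
          ≤ ‖X p s‖ * (B₁ + (Lx:ℝ) * (‖X p s‖ + ‖Z p s‖)) := by
        refine le_trans (real_inner_le_norm _ _) ?_
        exact mul_le_mul_of_nonneg_left (hbxb s) ha0
      have c2 : (⟪X p s, f s⟫ : ℝ) ≤ ‖X p s‖ * Mf := by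
        refine le_trans (real_inner_le_norm _ _) ?_
        exact mul_le_mul_of_nonneg_left (hMf s hs) ha0
      have c3 := hφinner (X p s)
      have e2 : ‖X p s‖ * (B₁ + (Lx:ℝ) * (‖X p s‖ + ‖Z p s‖)) + ‖X p s‖ * Mf
          = ‖X p s‖ * (B₁ + (Lx:ℝ) * (‖X p s‖ + ‖Z p s‖) + Mf) := by ring
      rw [e1]
      linarith [c1, c2, c3, e2.le]
    have h2 : (⟪Z p s, bz (X p s, Z p s) - gψ p (Z p s)⟫ : ℝ)
        ≤ ‖Z p s‖ * (B₂ + (Lz:ℝ) * (‖X p s‖ + ‖Z p s‖)) := by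
      have e1 : (⟪Z p s, bz (X p s, Z p s) - gψ p (Z p s)⟫ : ℝ)
          = ⟪Z p s, bz (X p s, Z p s)⟫ - ⟪Z p s, gψ p (Z p s)⟫ := by
        rw [inner_sub_right]
      have c1 : (⟪Z p s, bz (X p s, Z p s)⟫ : ℝ)
          ≤ ‖Z p s‖ * (B₂ + (Lz:ℝ) * (‖X p s‖ + ‖Z p s‖)) := by
        refine le_trans (real_inner_le_norm _ _) ?_
        exact mul_le_mul_of_nonneg_left (hbzb s) hb0
      have c2 := hψinner (Z p s)
      rw [e1]
      linarith
    have hsym1 : (⟪bx (X p s, Z p s) + f s - gφ p (X p s), X p s⟫ : ℝ)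
        = ⟪X p s, bx (X p s, Z p s) + f s - gφ p (X p s)⟫ := real_inner_comm _ _
    have hsym2 : (⟪bz (X p s, Z p s) - gψ p (Z p s), Z p s⟫ : ℝ)
        = ⟪Z p s, bz (X p s, Z p s) - gψ p (Z p s)⟫ := real_inner_comm _ _
    have halg := gronwall_alg (a := ‖X p s‖) (b := ‖Z p s‖) ha0 hb0 hB₁0 hB₂0 hMf0 hLx0 hLz0
    calc Dv s = 2 * ⟪X p s, bx (X p s, Z p s) + f s - gφ p (X p s)⟫
          + 2 * ⟪Z p s, bz (X p s, Z p s) - gψ p (Z p s)⟫ := by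
          rw [hDv]; simp only []; rw [hsym1, hsym2]; ring
      _ ≤ 2 * (‖X p s‖ * (B₁ + (Lx:ℝ) * (‖X p s‖ + ‖Z p s‖) + Mf))
          + 2 * (‖Z p s‖ * (B₂ + (Lz:ℝ) * (‖X p s‖ + ‖Z p s‖))) := by linarith [h1, h2]
      _ ≤ (B₁ + B₂ + Mf + 3 * (Lx:ℝ) + 3 * (Lz:ℝ)) * (1 + (‖X p s‖ ^ 2 + ‖Z p s‖ ^ 2)) := halg
      _ = K * (1 + v s) := by rw [hK, hvnorm s]
  set w : ℝ → ℝ := fun s => (1 + v s) * Real.exp (-K * s) with hw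
  have hwd : ∀ s ∈ Icc (0:ℝ) T, HasDerivWithinAt w
      (Dv s * Real.exp (-K * s) + (1 + v s) * (Real.exp (-K * s) * -K)) (Icc 0 T) s := by
    intro s hs
    have hexp : HasDerivAt (fun s : ℝ => Real.exp (-K * s)) (Real.exp (-K * s) * -K) s := by
      have h := ((hasDerivAt_id s).const_mul (-K)).exp
      simpa using h
    exact ((hvd s hs).const_add 1).mul (hexp.hasDerivWithinAt)
  have hwnonpos : ∀ s ∈ Icc (0:ℝ) T,
      Dv s * Real.exp (-K * s) + (1 + v s) * (Real.exp (-K * s) * -K) ≤ 0 := by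
    intro s hs
    have h1 := hDvle s hs
    have h2 : (0:ℝ) < Real.exp (-K * s) := Real.exp_pos _
    have h3 := mul_le_mul_of_nonneg_right h1 h2.le
    have h4 : K * (1 + v s) * Real.exp (-K * s)
        + (1 + v s) * (Real.exp (-K * s) * -K) = 0 := by ring
    linarith [h3, h4]
  have hwanti := my_antitoneOn_aux hwd hwnonpos
  have hvbound : ∀ s ∈ Icc (0:ℝ) T, 1 + v s ≤ R := by
    intro s hs
    have hws : w s ≤ w 0 := hwanti h0T hs hs.1
    rw [hw] at hws
    simp only [mul_zero, Real.exp_zero, mul_one, neg_zero] at hws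
    have hv0 : v 0 = ‖x₀‖^2 + ‖z₀‖^2 := by
      rw [hvnorm 0, hX0 p hp, hZ0 p hp]
    rw [hv0] at hws
    have hmul := mul_le_mul_of_nonneg_right hws (Real.exp_pos (K * s)).le
    rw [mul_assoc, ← Real.exp_add] at hmul
    have : -K * s + K * s = 0 := by ring
    rw [this, Real.exp_zero, mul_one] at hmul
    have hexp_le : Real.exp (K * s) ≤ Real.exp (K * T) :=
      Real.exp_le_exp.2 (mul_le_mul_of_nonneg_left hs.2 hK0)
    have hpos0 : (0:ℝ) ≤ 1 + ‖x₀‖^2 + ‖z₀‖^2 := by positivity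
    calc 1 + v s ≤ (1 + (‖x₀‖^2 + ‖z₀‖^2)) * Real.exp (K * s) := hmul
      _ ≤ (1 + ‖x₀‖^2 + ‖z₀‖^2) * Real.exp (K * T) := by
          rw [← add_assoc]
          exact mul_le_mul_of_nonneg_left hexp_le hpos0
      _ = R := by rw [hR]
  have hbzsq : ∀ s ∈ Icc (0:ℝ) T, ‖bz (X p s, Z p s)‖ ^ 2 ≤ C2 := by
    intro s hs
    have h2 := hvbound s hs
    rw [hvnorm s] at h2
    rw [hC2]
    exact bzsq_alg (norm_nonneg _) (norm_nonneg _) (norm_nonneg _) (hbzb s) hB₂0 hLz0 h2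
  have hintbz : ∫ s in (0:ℝ)..T, ‖bz (X p s, Z p s)‖ ^ 2 ≤ C2 * T := by
    have hle : ∫ s in (0:ℝ)..T, ‖bz (X p s, Z p s)‖ ^ 2 ≤ ∫ _ in (0:ℝ)..T, C2 := by
      apply intervalIntegral.integral_mono_on (le_of_lt hT)
      · apply ContinuousOn.intervalIntegrable
        rw [Set.uIcc_of_le (le_of_lt hT)]
        exact hI2
      · exact intervalIntegrable_const
      · exact hbzsq
    rwa [intervalIntegral.integral_const, sub_zero, smul_eq_mul, mul_comm] at hle
  have hkeyT := key p hp T hTT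
  have hFz₀ : moreauYosidaE ψ p z₀ ≤ (ψ z₀).toReal := by
    have := moreauYosidaE_le hp0 hψ0 hψproper z₀ (z := z₀) hz₀
    simpa using this
  have hFZT : 0 ≤ moreauYosidaE ψ p (Z p T) := moreauYosidaE_nonneg hp0 hψ0 hψproper _
  linarith [hkeyT, hFz₀, hFZT, hintbz]
end
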